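/- arXiv:1704.02660 — 5 statements merged into one kernel-verified Lean document; each statement's English description precedes it below -/
import Mathlib

section
/- If a Borel probability measure μ on ℝ is n-completely mixable with n-center c, then a* ≤ c ≤ b*, where a* = sup over α ∈ (0, 1/n) of R_{[α, 1−(n−1)α]}(μ) and b* = inf over α ∈ (0, 1/n) of R_{[(n−1)α, 1−α]}(μ). -/
open MeasureTheory ENNReal Set Filter ProbabilityTheory
open scoped Topology

set_option linter.unusedSectionVars false
set_option maxHeartbeats 1000000



/-- The tuple `μ` of Borel probability measures on ℝ is jointly mixable with center `C`:
there is a probability measure on ℝⁿ whose `i`-th one-dimensional marginal is `μ i` for each `i`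
and which gives probability one to the hyperplane `{x : x₁ + ⋯ + xₙ = C}`. -/
def IsJointMix (n : ℕ) (μ : Fin n → Measure ℝ) (C : ℝ) : Prop :=
  ∃ P : Measure (Fin n → ℝ), IsProbabilityMeasure P ∧
    (∀ i, P.map (fun x => x i) = μ i) ∧
    P {x | ∑ i, x i = C} = 1

/-- A Borel probability measure `μ` on ℝ is `n`-completely mixable with `n`-center `c`. -/
def IsCompletelyMixable (n : ℕ) (μ : Measure ℝ) (c : ℝ) : Prop :=
  IsJointMix n (fun _ => μ) (n * c)


/-- The quantile function of a probability measure on ℝ. -/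
noncomputable def quantile (μ : Measure ℝ) (t : ℝ) : ℝ :=
  sInf {x : ℝ | t ≤ (μ (Set.Iic x)).toReal}

/-- The average quantile functional `R_{[a,b]}(μ)`. -/
noncomputable def avgQuantile (μ : Measure ℝ) (a b : ℝ) : ℝ :=
  (b - a)⁻¹ * ∫ t in a..b, quantile μ t

section Quantile
variable (μ : Measure ℝ) [IsProbabilityMeasure μ]

lemma quantile_eq_sInf_cdf (t : ℝ) : quantile μ t = sInf {x | t ≤ cdf μ x} := by
  simp only [quantile, cdf_eq_real, measureReal_def]

lemma quantile_set_nonempty {t : ℝ} (ht : t < 1) : {x | t ≤ cdf μ x}.Nonempty := by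
  have := tendsto_cdf_atTop μ
  have h := this.eventually (eventually_ge_nhds ht)
  obtain ⟨x, hx⟩ := h.exists
  exact ⟨x, hx⟩

lemma quantile_set_bddBelow {t : ℝ} (ht : 0 < t) : BddBelow {x | t ≤ cdf μ x} := by
  have := tendsto_cdf_atBot μ
  have h := this.eventually (eventually_lt_nhds ht)
  obtain ⟨x, hx⟩ := h.exists
  refine ⟨x, fun y hy => ?_⟩
  by_contra hxy
  push_neg at hxy
  have : cdf μ y ≤ cdf μ x := monotone_cdf μ hxy.le
  have : t ≤ cdf μ x := le_trans hy this
  linarith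

lemma cdf_quantile_ge {t : ℝ} (ht0 : 0 < t) (ht : t < 1) : t ≤ cdf μ (quantile μ t) := by
  rw [quantile_eq_sInf_cdf]
  set q := sInf {x | t ≤ cdf μ x} with hq
  have hne := quantile_set_nonempty μ ht
  have hbdd := quantile_set_bddBelow μ ht0
  have key : ∀ y ∈ Ioi q, t ≤ cdf μ y := by
    intro y hy
    obtain ⟨a, ha, hay⟩ := (csInf_lt_iff hbdd hne).mp hy
    exact le_trans ha (monotone_cdf μ hay.le)
  have hrc : ContinuousWithinAt (cdf μ) (Ici q) q := (cdf μ).right_continuous q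
  have hrc' : Tendsto (cdf μ) (𝓝[>] q) (𝓝 (cdf μ q)) :=
    hrc.tendsto.mono_left (nhdsWithin_mono _ Ioi_subset_Ici_self)
  exact ge_of_tendsto hrc' (eventually_nhdsWithin_of_forall key)

lemma quantile_le_iff {t x : ℝ} (ht0 : 0 < t) (ht1 : t < 1) :
    quantile μ t ≤ x ↔ t ≤ cdf μ x := by
  constructor
  · intro h
    exact le_trans (cdf_quantile_ge μ ht0 ht1) (monotone_cdf μ h)
  · intro h
    rw [quantile_eq_sInf_cdf]
    exact csInf_le (quantile_set_bddBelow μ ht0) h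

lemma monotoneOn_quantile : MonotoneOn (quantile μ) (Set.Ioo 0 1) := by
  intro s hs t ht hst
  rw [quantile_eq_sInf_cdf, quantile_eq_sInf_cdf]
  refine csInf_le_csInf (quantile_set_bddBelow μ hs.1) (quantile_set_nonempty μ ht.2)
    fun x hx => le_trans hst hx

lemma lt_quantile_iff {t x : ℝ} (ht0 : 0 < t) (ht1 : t < 1) :
    x < quantile μ t ↔ cdf μ x < t := by
  rw [← not_le, ← not_le, quantile_le_iff μ ht0 ht1]

/-- The quantile transform: `μ` is the pushforward of Lebesgue on `(0,1)` under the quantile. -/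
lemma map_quantile : Measure.map (quantile μ) (volume.restrict (Set.Ioo (0:ℝ) 1)) = μ := by
  have hmeas : AEMeasurable (quantile μ) (volume.restrict (Set.Ioo (0:ℝ) 1)) :=
    aemeasurable_restrict_of_monotoneOn measurableSet_Ioo (monotoneOn_quantile μ)
  have hprob : IsProbabilityMeasure (volume.restrict (Set.Ioo (0:ℝ) 1)) := by
    constructor
    simp [Real.volume_Ioo]
  have hprob2 : IsProbabilityMeasure (Measure.map (quantile μ) (volume.restrict (Set.Ioo (0:ℝ) 1))) :=
    Measure.isProbabilityMeasure_map hmeas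
  refine Measure.ext_of_Iic _ _ (fun x => ?_)
  rw [Measure.map_apply_of_aemeasurable hmeas measurableSet_Iic]
  have hset : Set.Ioo (0:ℝ) 1 ∩ (quantile μ) ⁻¹' (Iic x) = Set.Ioo (0:ℝ) 1 ∩ Iic (cdf μ x) := by
    ext t
    simp only [mem_inter_iff, mem_Ioo, mem_preimage, mem_Iic, and_congr_right_iff]
    intro ht
    exact quantile_le_iff μ ht.1 ht.2
  rw [Measure.restrict_apply₀ (hmeas.nullMeasurable measurableSet_Iic), Set.inter_comm, hset]
  have h0 : 0 ≤ cdf μ x := cdf_nonneg μ x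
  have h1 : cdf μ x ≤ 1 := cdf_le_one μ x
  rcases eq_or_lt_of_le h1 with h1e | h1l
  · have : Set.Ioo (0:ℝ) 1 ∩ Iic (cdf μ x) = Set.Ioo 0 1 := by
      rw [inter_eq_left]
      intro t ht; exact le_trans ht.2.le (le_of_eq h1e.symm)
    rw [this, Real.volume_Ioo, ← ofReal_cdf μ x, ← h1e]
    norm_num
  · have : Set.Ioo (0:ℝ) 1 ∩ Iic (cdf μ x) = Set.Ioc 0 (cdf μ x) := by
      ext t
      simp only [mem_inter_iff, mem_Ioo, mem_Iic, mem_Ioc]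
      constructor
      · rintro ⟨⟨h01, _⟩, h2⟩; exact ⟨h01, h2⟩
      · rintro ⟨h01, h2⟩; exact ⟨⟨h01, lt_of_le_of_lt h2 h1l⟩, h2⟩
    rw [this, Real.volume_Ioc, ← ofReal_cdf μ x]
    norm_num

end Quantile


section KeyW

/-- bounded measurable functions are integrable on finite-measure sets -/
lemma integrableOn_of_bounded' {f : ℝ → ℝ} {s : Set ℝ} (hs : MeasurableSet s)
    (hvol : volume s ≠ ⊤)
    (hf : AEMeasurable f (volume.restrict s)) {C : ℝ} (hbd : ∀ t ∈ s, |f t| ≤ C) :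
    IntegrableOn f s := by
  have : IsFiniteMeasure (volume.restrict s) := by
    constructor
    rw [Measure.restrict_apply_univ]
    exact hvol.lt_top
  refine Integrable.mono' (integrable_const C) hf.aestronglyMeasurable ?_
  exact (ae_restrict_iff' hs).2 (ae_of_all _ hbd)

variable {q w : ℝ → ℝ} {α K M : ℝ}

lemma key_w (hα : 0 < α) (hα1 : α < 1)
    (hq : MonotoneOn q (Ioo 0 1)) (hqM : q (1 - α) = M)
    (hw0 : ∀ t, 0 ≤ w t) (hw1 : ∀ t, w t ≤ 1)
    (hwpos : ∀ t ∈ Ioo (0:ℝ) 1, 0 < w t → q t ≤ M)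
    (hwlt : ∀ t ∈ Ioo (0:ℝ) 1, w t < 1 → M ≤ q t)
    (hwint : ∫ t in Ioo (0:ℝ) 1, w t = 1 - α)
    (hwmeas : AEMeasurable w (volume.restrict (Ioo (0:ℝ) 1)))
    (hqmeas : AEMeasurable q (volume.restrict (Ioo (0:ℝ) 1))) :
    ∫ t in Ioo (0:ℝ) 1, max (q t - K) 0 * w t ≤ ∫ t in Ioo (0:ℝ) (1 - α), max (q t - K) 0 := by
  set D := max (M - K) 0 with hD
  have hD0 : 0 ≤ D := le_max_right _ _
  have hmem : (1 - α) ∈ Ioo (0:ℝ) 1 := ⟨by linarith, by linarith⟩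
  have hsub1 : Ioo (0:ℝ) (1-α) ⊆ Ioo 0 1 := Ioo_subset_Ioo le_rfl (by linarith)
  have hsub2 : Ico (1-α) (1:ℝ) ⊆ Ioo 0 1 := fun t ht => ⟨lt_of_lt_of_le hmem.1 ht.1, ht.2⟩
  have hsplit : Ioo (0:ℝ) (1-α) ∪ Ico (1-α) 1 = Ioo (0:ℝ) 1 :=
    Ioo_union_Ico_eq_Ioo hmem.1 (by linarith)
  -- measurability on sub-pieces
  have hle1 : volume.restrict (Ioo (0:ℝ) (1-α)) ≤ volume.restrict (Ioo (0:ℝ) 1) :=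
    Measure.restrict_mono hsub1 le_rfl
  have hle2 : volume.restrict (Ico (1-α) (1:ℝ)) ≤ volume.restrict (Ioo (0:ℝ) 1) :=
    Measure.restrict_mono hsub2 le_rfl
  have hq1 : AEMeasurable q (volume.restrict (Ioo (0:ℝ) (1-α))) := hqmeas.mono_measure hle1
  have hq2 : AEMeasurable q (volume.restrict (Ico (1-α) (1:ℝ))) := hqmeas.mono_measure hle2
  have hw1' : AEMeasurable w (volume.restrict (Ioo (0:ℝ) (1-α))) := hwmeas.mono_measure hle1
  have hw2' : AEMeasurable w (volume.restrict (Ico (1-α) (1:ℝ))) := hwmeas.mono_measure hle2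
  -- pointwise bounds
  have hbd_main : ∀ t ∈ Ioo (0:ℝ) 1, |max (q t - K) 0 * w t| ≤ D := by
    intro t ht
    rcases eq_or_lt_of_le (hw0 t) with h0 | h0
    · rw [← h0, mul_zero]; simpa using hD0
    · have hqt : q t ≤ M := hwpos t ht h0
      have h1 : max (q t - K) 0 ≤ D := max_le_max (by linarith) le_rfl
      have : max (q t - K) 0 * w t ≤ D * 1 :=
        mul_le_mul h1 (hw1 t) (hw0 t) hD0
      rw [abs_of_nonneg (mul_nonneg (le_max_right _ _) (hw0 t))]
      linarith
  have hbd_low : ∀ t ∈ Ioo (0:ℝ) (1-α), |max (q t - K) 0| ≤ D := by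
    intro t ht
    have hqt : q t ≤ M := by
      rw [← hqM]
      exact hq (hsub1 ht) hmem (le_of_lt ht.2)
    rw [abs_of_nonneg (le_max_right _ _)]
    exact max_le_max (by linarith) le_rfl
  -- integrability
  have vol1 : volume (Ioo (0:ℝ) (1-α)) ≠ ⊤ := by simp [Real.volume_Ioo]
  have vol2 : volume (Ico (1-α) (1:ℝ)) ≠ ⊤ := by simp [Real.volume_Ico]
  have vol3 : volume (Ioo (0:ℝ) 1) ≠ ⊤ := by simp [Real.volume_Ioo]
  have m_fg : AEMeasurable (fun t => max (q t - K) 0 * w t) (volume.restrict (Ioo (0:ℝ) 1)) :=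
    ((hqmeas.sub aemeasurable_const).max aemeasurable_const).mul hwmeas
  have i_main : IntegrableOn (fun t => max (q t - K) 0 * w t) (Ioo (0:ℝ) 1) :=
    integrableOn_of_bounded' measurableSet_Ioo vol3 m_fg hbd_main
  have i_low_fw : IntegrableOn (fun t => max (q t - K) 0 * w t) (Ioo (0:ℝ) (1-α)) :=
    i_main.mono_set hsub1
  have i_hi_fw : IntegrableOn (fun t => max (q t - K) 0 * w t) (Ico (1-α) 1) :=
    i_main.mono_set hsub2
  have i_low_f : IntegrableOn (fun t => max (q t - K) 0) (Ioo (0:ℝ) (1-α)) :=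
    integrableOn_of_bounded' measurableSet_Ioo vol1
      ((hq1.sub aemeasurable_const).max aemeasurable_const) hbd_low
  have i_w : IntegrableOn w (Ioo (0:ℝ) 1) :=
    integrableOn_of_bounded' measurableSet_Ioo vol3 hwmeas
      (fun t _ => abs_le.2 ⟨by linarith [hw0 t], hw1 t⟩)
  have i_w_low : IntegrableOn w (Ioo (0:ℝ) (1-α)) := i_w.mono_set hsub1
  have i_w_hi : IntegrableOn w (Ico (1-α) 1) := i_w.mono_set hsub2
  have i_one : IntegrableOn (fun _ : ℝ => (1:ℝ)) (Ioo (0:ℝ) (1-α)) :=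
    integrableOn_const vol1
  have i_ombw : IntegrableOn (fun t => 1 - w t) (Ioo (0:ℝ) (1-α)) := i_one.sub i_w_low
  have i_low_f1mw : IntegrableOn (fun t => max (q t - K) 0 * (1 - w t)) (Ioo (0:ℝ) (1-α)) := by
    refine integrableOn_of_bounded' measurableSet_Ioo vol1 ?_ (C := D) ?_
    · exact ((hq1.sub aemeasurable_const).max aemeasurable_const).mul
        (aemeasurable_const.sub hw1')
    · intro t ht
      have h1 : |max (q t - K) 0| ≤ D := hbd_low t ht
      have h2 : |1 - w t| ≤ 1 := abs_le.2 ⟨by linarith [hw1 t], by linarith [hw0 t]⟩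
      calc |max (q t - K) 0 * (1 - w t)| = |max (q t - K) 0| * |1 - w t| := abs_mul _ _
        _ ≤ D * 1 := mul_le_mul h1 h2 (abs_nonneg _) hD0
        _ = D := mul_one D
  -- split the LHS
  have hdisj : Disjoint (Ioo (0:ℝ) (1-α)) (Ico (1-α) 1) := by
    refine Set.disjoint_left.2 fun t ht ht' => ?_
    exact absurd ht.2 (not_lt.2 ht'.1)
  have hLHS : ∫ t in Ioo (0:ℝ) 1, max (q t - K) 0 * w t
      = (∫ t in Ioo (0:ℝ) (1-α), max (q t - K) 0 * w t)
        + ∫ t in Ico (1-α) 1, max (q t - K) 0 * w t := by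
    rw [← hsplit]
    exact setIntegral_union hdisj measurableSet_Ico i_low_fw i_hi_fw
  -- mass bookkeeping
  have hmass : ∫ t in Ico (1-α) (1:ℝ), w t = ∫ t in Ioo (0:ℝ) (1-α), (1 - w t) := by
    have hws : ∫ t in Ioo (0:ℝ) 1, w t
        = (∫ t in Ioo (0:ℝ) (1-α), w t) + ∫ t in Ico (1-α) 1, w t := by
      rw [← hsplit]
      exact setIntegral_union hdisj measurableSet_Ico i_w_low i_w_hi
    have hconst : ∫ _t in Ioo (0:ℝ) (1-α), (1:ℝ) = 1 - α := by
      rw [setIntegral_const, smul_eq_mul, mul_one, Real.volume_real_Ioo_of_le (by linarith), sub_zero]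
    rw [integral_sub i_one i_w_low, hconst]
    have := hwint
    rw [hws] at this
    linarith
  -- step A
  have hA : ∫ t in Ico (1-α) 1, max (q t - K) 0 * w t ≤ ∫ t in Ico (1-α) 1, D * w t := by
    refine setIntegral_mono_on i_hi_fw ((i_w_hi).const_mul D) measurableSet_Ico ?_
    intro t ht
    rcases eq_or_lt_of_le (hw0 t) with h0 | h0
    · rw [← h0, mul_zero, mul_zero]
    · have hqt : q t ≤ M := hwpos t (hsub2 ht) h0
      exact mul_le_mul_of_nonneg_right (max_le_max (by linarith) le_rfl) (hw0 t)
  -- step C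
  have hC : ∫ t in Ioo (0:ℝ) (1-α), D * (1 - w t)
      ≤ ∫ t in Ioo (0:ℝ) (1-α), max (q t - K) 0 * (1 - w t) := by
    refine setIntegral_mono_on (i_ombw.const_mul D) i_low_f1mw measurableSet_Ioo ?_
    intro t ht
    rcases eq_or_lt_of_le (hw1 t) with h1 | h1
    · rw [h1]; simp
    · have hqt : M ≤ q t := hwlt t (hsub1 ht) h1
      exact mul_le_mul_of_nonneg_right (max_le_max (by linarith) le_rfl) (by linarith [hw1 t])
  -- combine
  have hfin : (∫ t in Ioo (0:ℝ) (1-α), max (q t - K) 0 * w t)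
      + ∫ t in Ioo (0:ℝ) (1-α), max (q t - K) 0 * (1 - w t)
      = ∫ t in Ioo (0:ℝ) (1-α), max (q t - K) 0 := by
    rw [← integral_add i_low_fw i_low_f1mw]
    congr 1
    ext t
    ring
  have hDmul : ∫ t in Ico (1-α) 1, D * w t = ∫ t in Ioo (0:ℝ) (1-α), D * (1 - w t) := by
    rw [integral_const_mul, integral_const_mul, hmass]
  calc ∫ t in Ioo (0:ℝ) 1, max (q t - K) 0 * w t
      = (∫ t in Ioo (0:ℝ) (1-α), max (q t - K) 0 * w t)
        + ∫ t in Ico (1-α) 1, max (q t - K) 0 * w t := hLHS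
    _ ≤ (∫ t in Ioo (0:ℝ) (1-α), max (q t - K) 0 * w t)
        + ∫ t in Ioo (0:ℝ) (1-α), max (q t - K) 0 * (1 - w t) := by
        have := hA.trans (le_of_eq hDmul)
        exact add_le_add_right (this.trans hC) _
    _ = ∫ t in Ioo (0:ℝ) (1-α), max (q t - K) 0 := hfin

end KeyW


section Phi

variable (μ : Measure ℝ) [IsProbabilityMeasure μ]

/-- weight: 1 below M, partial weight θ at the atom M, 0 above, where M = quantile μ (1-α). -/
noncomputable def phi (α : ℝ) : ℝ → ℝ :=
  fun x =>
    (Set.Iio (quantile μ (1-α))).indicator (fun _ => (1:ℝ)) x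
    + ((1 - α - (μ (Set.Iio (quantile μ (1-α)))).toReal) / (μ {quantile μ (1-α)}).toReal)
      * ({quantile μ (1-α)} : Set ℝ).indicator (fun _ => (1:ℝ)) x

variable {α : ℝ} (hα0 : 0 < α) (hα1 : α < 1)

lemma measure_Iio_le (hα0 : 0 < α) (hα1 : α < 1) :
    (μ (Set.Iio (quantile μ (1-α)))).toReal ≤ 1 - α := by
  set M := quantile μ (1-α) with hM
  have hUnion : Set.Iio M = ⋃ n : ℕ, Set.Iic (M - ((n:ℝ)+1)⁻¹) := by
    ext x
    simp only [mem_Iio, mem_iUnion, mem_Iic]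
    constructor
    · intro hx
      obtain ⟨n, hn⟩ := exists_nat_gt (M - x)⁻¹
      refine ⟨n, ?_⟩
      have h1 : (0:ℝ) < M - x := by linarith
      have h2 : (M - x)⁻¹ < (n:ℝ) + 1 := by linarith
      have h3 : ((n:ℝ)+1)⁻¹ < M - x := by
        have := inv_strictAnti₀ (inv_pos.2 h1) h2
        rwa [inv_inv] at this
      linarith
    · rintro ⟨n, hn⟩
      have : (0:ℝ) < ((n:ℝ)+1)⁻¹ := by positivity
      linarith
  have hmono : Monotone (fun n : ℕ => Set.Iic (M - ((n:ℝ)+1)⁻¹)) := by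
    intro a b hab
    apply Iic_subset_Iic.2
    have hcast : (a:ℝ) ≤ (b:ℝ) := Nat.cast_le.2 hab
    have : ((b:ℝ)+1)⁻¹ ≤ ((a:ℝ)+1)⁻¹ := by
      apply inv_anti₀ (by positivity)
      linarith
    linarith
  have hsup : μ (Set.Iio M) = ⨆ n : ℕ, μ (Set.Iic (M - ((n:ℝ)+1)⁻¹)) := by
    rw [hUnion]
    exact hmono.measure_iUnion
  have hle : μ (Set.Iio M) ≤ ENNReal.ofReal (1 - α) := by
    rw [hsup]
    refine iSup_le fun n => ?_
    have hpos : (0:ℝ) < ((n:ℝ)+1)⁻¹ := by positivity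
    have hx : M - ((n:ℝ)+1)⁻¹ < M := by linarith
    have hcdf : cdf μ (M - ((n:ℝ)+1)⁻¹) < 1 - α :=
      (lt_quantile_iff μ (by linarith) (by linarith)).1 hx
    rw [← ofReal_cdf μ]
    exact ENNReal.ofReal_le_ofReal hcdf.le
  calc (μ (Set.Iio M)).toReal ≤ (ENNReal.ofReal (1-α)).toReal :=
        ENNReal.toReal_mono ENNReal.ofReal_ne_top hle
    _ = 1 - α := ENNReal.toReal_ofReal (by linarith)

lemma cdf_quantile_ge' (hα0 : 0 < α) (hα1 : α < 1) :
    1 - α ≤ (μ (Set.Iic (quantile μ (1-α)))).toReal := by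
  have := cdf_quantile_ge μ (t := 1-α) (by linarith) (by linarith)
  rwa [cdf_eq_real, measureReal_def] at this

lemma Iic_split : μ (Set.Iic (quantile μ (1-α)))
    = μ (Set.Iio (quantile μ (1-α))) + μ {quantile μ (1-α)} := by
  rw [← measure_union (by simp) (measurableSet_singleton _)]
  congr 1
  ext x
  simp only [mem_union, mem_Iio, mem_singleton_iff, mem_Iic]
  exact le_iff_lt_or_eq

lemma theta_nonneg (hα0 : 0 < α) (hα1 : α < 1) :
    0 ≤ (1 - α - (μ (Set.Iio (quantile μ (1-α)))).toReal) / (μ {quantile μ (1-α)}).toReal :=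
  div_nonneg (by linarith [measure_Iio_le μ hα0 hα1]) ENNReal.toReal_nonneg

lemma theta_le_one (hα0 : 0 < α) (hα1 : α < 1) :
    (1 - α - (μ (Set.Iio (quantile μ (1-α)))).toReal) / (μ {quantile μ (1-α)}).toReal ≤ 1 := by
  set m := (μ {quantile μ (1-α)}).toReal with hm
  rcases eq_or_lt_of_le (ENNReal.toReal_nonneg : (0:ℝ) ≤ m) with h0 | h0
  · rw [hm, ← h0]
    simp
  · rw [div_le_one h0]
    have h1 := cdf_quantile_ge' μ hα0 hα1
    have h2 : (μ (Set.Iic (quantile μ (1-α)))).toReal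
        = (μ (Set.Iio (quantile μ (1-α)))).toReal + m := by
      rw [Iic_split μ, ENNReal.toReal_add (measure_ne_top μ _) (measure_ne_top μ _)]
    linarith

lemma phi_nonneg (hα0 : 0 < α) (hα1 : α < 1) (x : ℝ) : 0 ≤ phi μ α x := by
  unfold phi
  have h1 : (0:ℝ) ≤ (Set.Iio (quantile μ (1-α))).indicator (fun _ => (1:ℝ)) x :=
    Set.indicator_nonneg (by intro _ _; norm_num) x
  have h2 : (0:ℝ) ≤ ({quantile μ (1-α)} : Set ℝ).indicator (fun _ => (1:ℝ)) x :=
    Set.indicator_nonneg (by intro _ _; norm_num) x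
  have := theta_nonneg μ hα0 hα1
  positivity

lemma phi_le_one (hα0 : 0 < α) (hα1 : α < 1) (x : ℝ) : phi μ α x ≤ 1 := by
  unfold phi
  rcases lt_trichotomy x (quantile μ (1-α)) with h | h | h
  · simp [Set.indicator_apply, h, ne_of_lt h]
  · simpa [Set.indicator_apply, h] using theta_le_one μ hα0 hα1
  · simp [Set.indicator_apply, not_lt.2 h.le, ne_of_gt h]

lemma phi_of_lt {x : ℝ} (h : x < quantile μ (1-α)) : phi μ α x = 1 := by
  unfold phi
  simp [Set.indicator_apply, h, ne_of_lt h]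

lemma phi_of_gt {x : ℝ} (h : quantile μ (1-α) < x) : phi μ α x = 0 := by
  unfold phi
  simp [Set.indicator_apply, not_lt.2 h.le, ne_of_gt h]

lemma measurable_phi : Measurable (phi μ α) := by
  unfold phi
  exact (measurable_const.indicator measurableSet_Iio).add
    (((measurable_const.indicator (measurableSet_singleton _))).const_mul _)

lemma integral_phi (hα0 : 0 < α) (hα1 : α < 1) : ∫ x, phi μ α x ∂μ = 1 - α := by
  set M := quantile μ (1-α) with hM
  set θ := (1 - α - (μ (Set.Iio M)).toReal) / (μ {M}).toReal with hθ
  have hint : ∫ x, phi μ α x ∂μ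
      = (μ (Set.Iio M)).toReal + θ * (μ {M}).toReal := by
    unfold phi
    rw [integral_add]
    · congr 1
      · rw [integral_indicator_const (1:ℝ) measurableSet_Iio]
        simp [measureReal_def]; rfl
      · rw [integral_const_mul, integral_indicator_const (1:ℝ) (measurableSet_singleton _)]
        simp [measureReal_def]; rfl
    · refine (integrable_const (1:ℝ)).indicator measurableSet_Iio
    · exact ((integrable_const (1:ℝ)).indicator (measurableSet_singleton _)).const_mul _
  rw [hint]
  have h1 := measure_Iio_le μ hα0 hα1
  have h2 := cdf_quantile_ge' μ hα0 hα1
  have h3 : (μ (Set.Iic (quantile μ (1-α)))).toReal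
      = (μ (Set.Iio (quantile μ (1-α)))).toReal + (μ {quantile μ (1-α)}).toReal := by
    rw [Iic_split μ, ENNReal.toReal_add (measure_ne_top μ _) (measure_ne_top μ _)]
  simp only [← hM] at h1 h2 h3
  rcases eq_or_lt_of_le (ENNReal.toReal_nonneg : (0:ℝ) ≤ (μ {M}).toReal) with h0 | h0
  · rw [← h0, mul_zero, add_zero]
    rw [← h0, add_zero] at h3
    linarith
  · rw [hθ, div_mul_cancel₀ _ (ne_of_gt h0)]
    ring

end Phi


section HL
variable (μ : Measure ℝ) [IsProbabilityMeasure μ]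

lemma integral_eq_quantile_integral (f : ℝ → ℝ) (hf : AEStronglyMeasurable f μ) :
    ∫ x, f x ∂μ = ∫ t in Set.Ioo (0:ℝ) 1, f (quantile μ t) := by
  have hq : AEMeasurable (quantile μ) (volume.restrict (Set.Ioo (0:ℝ) 1)) :=
    aemeasurable_restrict_of_monotoneOn measurableSet_Ioo (monotoneOn_quantile μ)
  have hf' : AEStronglyMeasurable f
      (Measure.map (quantile μ) (volume.restrict (Set.Ioo (0:ℝ) 1))) := by
    rwa [map_quantile μ]
  conv_lhs => rw [← map_quantile μ]
  rw [integral_map hq hf']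

lemma hl_bound {α a : ℝ} (hα0 : 0 < α) (hα1 : α < 1)
    (ha : 0 < a) (hab : a < 1 - α) :
    ∫ x, max (x - quantile μ a) 0 * phi μ α x ∂μ
      ≤ (∫ t in Set.Ioo a (1-α), quantile μ t) - quantile μ a * (1 - α - a) := by
  set K := quantile μ a with hK
  set M := quantile μ (1-α) with hM
  have hq : AEMeasurable (quantile μ) (volume.restrict (Set.Ioo (0:ℝ) 1)) :=
    aemeasurable_restrict_of_monotoneOn measurableSet_Ioo (monotoneOn_quantile μ)
  have hφm : Measurable (phi μ α) := measurable_phi μ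
  have hLHS : ∫ x, max (x - K) 0 * phi μ α x ∂μ
      = ∫ t in Set.Ioo (0:ℝ) 1, max (quantile μ t - K) 0 * phi μ α (quantile μ t) :=
    integral_eq_quantile_integral μ _
      (((measurable_id.sub measurable_const).max measurable_const).mul hφm).aestronglyMeasurable
  have hwint : ∫ t in Set.Ioo (0:ℝ) 1, phi μ α (quantile μ t) = 1 - α := by
    rw [← integral_eq_quantile_integral μ _ hφm.aestronglyMeasurable]
    exact integral_phi μ hα0 hα1
  have hkey := key_w (q := quantile μ) (w := fun t => phi μ α (quantile μ t)) (K := K) (M := M)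
      hα0 hα1 (monotoneOn_quantile μ) hM.symm
      (fun t => phi_nonneg μ hα0 hα1 _) (fun t => phi_le_one μ hα0 hα1 _)
      (fun t ht hw => by
        by_contra hgt
        push_neg at hgt
        rw [hM] at hgt
        simp only [phi_of_gt μ hgt] at hw
        exact lt_irrefl _ hw)
      (fun t ht hw => by
        by_contra hgt
        push_neg at hgt
        rw [hM] at hgt
        simp only [phi_of_lt μ hgt] at hw
        exact lt_irrefl _ hw)
      hwint (hφm.comp_aemeasurable hq) hq
  rw [hLHS]
  refine le_trans hkey (le_of_eq ?_)
  have hsplit : Set.Ioo (0:ℝ) (1-α) = Set.Ioo 0 a ∪ Set.Ico a (1-α) :=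
    (Set.Ioo_union_Ico_eq_Ioo ha hab.le).symm
  have hsub_a : Set.Ioo (0:ℝ) a ⊆ Set.Ioo 0 (1-α) := Set.Ioo_subset_Ioo le_rfl hab.le
  have hsub_b : Set.Ico a (1-α) ⊆ Set.Ioo 0 (1-α) :=
    fun t ht => ⟨lt_of_lt_of_le ha ht.1, ht.2⟩
  have hsub01 : Set.Ioo (0:ℝ) (1-α) ⊆ Set.Ioo 0 1 :=
    Set.Ioo_subset_Ioo le_rfl (by linarith)
  have hmem_a : a ∈ Set.Ioo (0:ℝ) 1 := ⟨ha, by linarith⟩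
  have hqbound : ∀ t ∈ Set.Ioo (0:ℝ) (1-α), |max (quantile μ t - K) 0| ≤ max (M - K) 0 := by
    intro t ht
    have h1 : quantile μ t ≤ M := by
      rw [hM]
      exact monotoneOn_quantile μ (hsub01 ht) ⟨by linarith, by linarith⟩ ht.2.le
    rw [abs_of_nonneg (le_max_right _ _)]
    exact max_le_max (by linarith) le_rfl
  have hint_whole : IntegrableOn (fun t => max (quantile μ t - K) 0) (Set.Ioo (0:ℝ) (1-α)) :=
    integrableOn_of_bounded' measurableSet_Ioo (by simp [Real.volume_Ioo])
      (((hq.mono_measure (Measure.restrict_mono hsub01 le_rfl)).sub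
        aemeasurable_const).max aemeasurable_const) hqbound
  have hzero : ∫ t in Set.Ioo (0:ℝ) a, max (quantile μ t - K) 0 = 0 := by
    rw [setIntegral_congr_fun measurableSet_Ioo (g := fun _ => (0:ℝ))
      (fun t ht => by
        have h2 : quantile μ t ≤ K := by
          rw [hK]
          exact monotoneOn_quantile μ (hsub01 (hsub_a ht)) hmem_a ht.2.le
        exact max_eq_right (by linarith))]
    exact integral_zero _ _
  have hIq : IntegrableOn (quantile μ) (Set.Ioo a (1-α)) := by
    have hmono : MonotoneOn (quantile μ) (Set.uIcc a (1-α)) := by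
      rw [Set.uIcc_of_le hab.le]
      exact (monotoneOn_quantile μ).mono
        (fun t ht => ⟨lt_of_lt_of_le ha ht.1, lt_of_le_of_lt ht.2 (by linarith)⟩)
    exact hmono.intervalIntegrable.1.mono_set Set.Ioo_subset_Ioc_self
  have hIco : ∫ t in Set.Ico a (1-α), max (quantile μ t - K) 0
      = (∫ t in Set.Ioo a (1-α), quantile μ t) - K * (1-α-a) := by
    have h1 : ∀ t ∈ Set.Ico a (1-α), max (quantile μ t - K) 0 = quantile μ t - K := by
      intro t ht
      have h2 : K ≤ quantile μ t := by
        rw [hK]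
        exact monotoneOn_quantile μ hmem_a (hsub01 (hsub_b ht)) ht.1
      exact max_eq_left (by linarith)
    rw [setIntegral_congr_fun measurableSet_Ico h1, integral_Ico_eq_integral_Ioo,
      integral_sub hIq (integrableOn_const (by simp [Real.volume_Ioo] : volume (Set.Ioo a (1-α)) < ⊤).ne),
      setIntegral_const, smul_eq_mul, Real.volume_real_Ioo_of_le (by linarith)]
    ring
  have hdisj : Disjoint (Set.Ioo (0:ℝ) a) (Set.Ico a (1-α)) :=
    Set.disjoint_left.2 fun t ht ht' => absurd ht.2 (not_lt.2 ht'.1)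
  calc ∫ t in Set.Ioo (0:ℝ) (1-α), max (quantile μ t - K) 0
      = (∫ t in Set.Ioo (0:ℝ) a, max (quantile μ t - K) 0)
        + ∫ t in Set.Ico a (1-α), max (quantile μ t - K) 0 := by
        rw [hsplit]
        exact setIntegral_union hdisj measurableSet_Ico
          (hint_whole.mono_set hsub_a) (hint_whole.mono_set hsub_b)
    _ = (∫ t in Set.Ioo a (1-α), quantile μ t) - K * (1-α-a) := by rw [hzero, hIco]; ring

end HL

section Main

lemma one_sub_prod_le_sum_one_sub {n : ℕ} (f : Fin n → ℝ)
    (h0 : ∀ j, 0 ≤ f j) (h1 : ∀ j, f j ≤ 1) :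
    1 - ∏ j, f j ≤ ∑ j, (1 - f j) := by
  induction n with
  | zero => simp
  | succ m ih =>
    rw [Fin.prod_univ_succ, Fin.sum_univ_succ]
    have hprod0 : 0 ≤ ∏ j : Fin m, f j.succ := Finset.prod_nonneg (fun j _ => h0 _)
    have hprod1 : ∏ j : Fin m, f j.succ ≤ 1 :=
      Finset.prod_le_one (fun j _ => h0 _) (fun j _ => h1 _)
    have hih := ih (fun j => f j.succ) (fun j => h0 _) (fun j => h1 _)
    nlinarith [h0 0, h1 0]

lemma mixable_upper (n : ℕ) (hn : 2 ≤ n) (μ : Measure ℝ) [IsProbabilityMeasure μ]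
    (c α : ℝ) (hα0 : 0 < α) (hαn : α < 1 / n) (hmix : IsCompletelyMixable n μ c) :
    c ≤ avgQuantile μ (((n:ℝ) - 1) * α) (1 - α) := by
  obtain ⟨P, hP, hmarg, hsum⟩ := hmix
  have hn0 : (0:ℝ) < n := by positivity
  have hn2 : (2:ℝ) ≤ (n:ℝ) := by exact_mod_cast hn
  have hαn' : (n:ℝ) * α < 1 := by
    rw [lt_div_iff₀ hn0] at hαn
    linarith
  set a := ((n:ℝ) - 1) * α with ha_def
  have ha : 0 < a := mul_pos (by linarith) hα0
  have hexp : a = (n:ℝ)*α - α := by rw [ha_def]; ring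
  have hab : a < 1 - α := by rw [hexp]; linarith
  have hα1 : α < 1 := by nlinarith
  set K := quantile μ a with hK
  set M := quantile μ (1-α) with hM
  set φ := phi μ α with hφ
  set H := fun x : Fin n → ℝ => ∏ j, φ (x j) with hH
  have hφm : Measurable φ := measurable_phi μ
  have hHmeas : Measurable H :=
    Finset.measurable_prod _ (fun j _ => hφm.comp (measurable_pi_apply j))
  have hφ0 : ∀ y, 0 ≤ φ y := phi_nonneg μ hα0 hα1
  have hφ1 : ∀ y, φ y ≤ 1 := phi_le_one μ hα0 hα1
  have hH0 : ∀ x, 0 ≤ H x := fun x => Finset.prod_nonneg fun j _ => hφ0 _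
  have hH1 : ∀ x, H x ≤ 1 :=
    fun x => Finset.prod_le_one (fun j _ => hφ0 _) (fun j _ => hφ1 _)
  -- marginal integral identity
  have hmargint : ∀ (i : Fin n) (g : ℝ → ℝ), Measurable g →
      ∫ x, g (x i) ∂P = ∫ y, g y ∂μ := by
    intro i g hg
    have hmargi : P.map (fun x => x i) = μ := hmarg i
    have hg' : AEStronglyMeasurable g (P.map (fun x => x i)) := by
      rw [hmargi]
      exact hg.aestronglyMeasurable
    rw [← hmargi]
    exact (integral_map (measurable_pi_apply i).aemeasurable hg').symm
  -- hyperplane a.e.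
  have hae : ∀ᵐ x ∂P, ∑ i, x i = (n:ℝ) * c := by
    have hSmeas : MeasurableSet {x : Fin n → ℝ | ∑ i, x i = (n:ℝ) * c} :=
      measurableSet_eq_fun (Finset.measurable_sum _ fun i _ => measurable_pi_apply i)
        measurable_const
    rw [ae_iff]
    have : {x : Fin n → ℝ | ¬ ∑ i, x i = (n:ℝ) * c}
        = {x : Fin n → ℝ | ∑ i, x i = (n:ℝ) * c}ᶜ := rfl
    rw [this]
    exact (prob_compl_eq_zero_iff hSmeas).2 hsum
  set p := ∫ x, H x ∂P with hp
  have hint_H : Integrable H P := by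
    refine Integrable.mono' (integrable_const 1) hHmeas.aestronglyMeasurable (ae_of_all _ ?_)
    intro x
    rw [Real.norm_eq_abs, abs_of_nonneg (hH0 x)]
    exact hH1 x
  have hint_phi_i : ∀ i : Fin n, Integrable (fun x => φ (x i)) P := by
    intro i
    refine Integrable.mono' (integrable_const 1)
      (hφm.comp (measurable_pi_apply i)).aestronglyMeasurable (ae_of_all _ ?_)
    intro x
    rw [Real.norm_eq_abs, abs_of_nonneg (hφ0 _)]
    exact hφ1 _
  have hphi_int : ∀ i : Fin n, ∫ x, φ (x i) ∂P = 1 - α := by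
    intro i
    rw [hmargint i φ hφm, hφ]
    exact integral_phi μ hα0 hα1
  -- lower bound on p
  have hint_1mH : Integrable (fun x : Fin n → ℝ => 1 - H x) P := (integrable_const 1).sub hint_H
  have hint_sub : ∀ j : Fin n, Integrable (fun x : Fin n → ℝ => 1 - φ (x j)) P :=
    fun j => (integrable_const 1).sub (hint_phi_i j)
  have hp_ge : 1 - (n:ℝ) * α ≤ p := by
    have hpt : ∀ x : Fin n → ℝ, 1 - H x ≤ ∑ j, (1 - φ (x j)) := fun x =>
      one_sub_prod_le_sum_one_sub _ (fun j => hφ0 _) (fun j => hφ1 _)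
    have hmono := integral_mono (f := fun x : Fin n → ℝ => 1 - H x)
      (g := fun x : Fin n → ℝ => ∑ j, (1 - φ (x j))) hint_1mH
      (integrable_finset_sum _ (fun j _ => hint_sub j)) hpt
    have hL1 : ∫ x, (1 - H x) ∂P = 1 - p := by
      rw [integral_sub (integrable_const 1) hint_H, integral_const]
      simp [hp]
    have hR1 : ∫ x, (∑ j, (1 - φ (x j))) ∂P = (n:ℝ) * α := by
      rw [integral_finset_sum _ (fun j _ => hint_sub j)]
      have heach : ∀ j : Fin n, ∫ x, (1 - φ (x j)) ∂P = α := by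
        intro j
        rw [integral_sub (integrable_const 1) (hint_phi_i j), integral_const, hphi_int j]
        simp
      rw [Finset.sum_congr rfl (fun j _ => heach j), Finset.sum_const, Finset.card_univ,
        Fintype.card_fin, nsmul_eq_mul]
    rw [hL1, hR1] at hmono
    linarith
  -- bounds on coordinates on the support of H
  have hbound_i : ∀ i : Fin n, ∀ᵐ x ∂P,
      ‖x i * H x‖ ≤ max |M| |(n:ℝ)*c - ((n:ℝ)-1)*M| := by
    intro i
    filter_upwards [hae] with x hx
    rw [Real.norm_eq_abs]
    rcases eq_or_lt_of_le (hH0 x) with h0 | h0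
    · rw [← h0, mul_zero, abs_zero]
      positivity
    · have hxj : ∀ j, x j ≤ M := by
        intro j
        by_contra hgt
        push_neg at hgt
        rw [hM] at hgt
        have hzero : φ (x j) = 0 := by rw [hφ]; exact phi_of_gt μ hgt
        have : H x = 0 := by
          rw [hH]
          exact Finset.prod_eq_zero (Finset.mem_univ j) hzero
        rw [this] at h0
        exact lt_irrefl _ h0
      have hsum_others : ∑ j ∈ Finset.univ.erase i, x j ≤ ((n:ℝ)-1) * M := by
        calc ∑ j ∈ Finset.univ.erase i, x j ≤ ∑ _j ∈ Finset.univ.erase i, M :=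
            Finset.sum_le_sum (fun j _ => hxj j)
          _ = ((n:ℝ)-1) * M := by
            rw [Finset.sum_const, Finset.card_erase_of_mem (Finset.mem_univ i),
              Finset.card_univ, Fintype.card_fin, nsmul_eq_mul, Nat.cast_sub (by omega)]
            norm_num
      have hx' : x i + ∑ j ∈ Finset.univ.erase i, x j = (n:ℝ)*c := by
        rw [Finset.add_sum_erase _ _ (Finset.mem_univ i)]
        exact hx
      have hxi_ge : (n:ℝ)*c - ((n:ℝ)-1)*M ≤ x i := by linarith
      have habs : |x i| ≤ max |M| |(n:ℝ)*c - ((n:ℝ)-1)*M| := by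
        rw [abs_le]
        constructor
        · have h1 := neg_abs_le ((n:ℝ)*c - ((n:ℝ)-1)*M)
          have h2 : |(n:ℝ)*c - ((n:ℝ)-1)*M| ≤ max |M| |(n:ℝ)*c - ((n:ℝ)-1)*M| :=
            le_max_right _ _
          linarith
        · have h1 : |M| ≤ max |M| |(n:ℝ)*c - ((n:ℝ)-1)*M| := le_max_left _ _
          have h2 := le_abs_self M
          linarith [hxj i]
      calc |x i * H x| = |x i| * |H x| := abs_mul _ _
        _ ≤ max |M| |(n:ℝ)*c - ((n:ℝ)-1)*M| * 1 := by
            refine mul_le_mul habs ?_ (abs_nonneg _) (le_trans (abs_nonneg _) habs)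
            rw [abs_of_nonneg (hH0 x)]
            exact hH1 x
        _ = max |M| |(n:ℝ)*c - ((n:ℝ)-1)*M| := mul_one _
  have hint_xiH : ∀ i : Fin n, Integrable (fun x => x i * H x) P := fun i =>
    Integrable.mono' (integrable_const (max |M| |(n:ℝ)*c - ((n:ℝ)-1)*M|))
      ((measurable_pi_apply i).mul hHmeas).aestronglyMeasurable (hbound_i i)
  -- integrability of the max term
  have hint_max_i : ∀ i : Fin n, Integrable (fun x => max (x i - K) 0 * φ (x i)) P := by
    intro i
    refine Integrable.mono' (integrable_const (max (M - K) 0))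
      ((((measurable_pi_apply i).sub measurable_const).max measurable_const).mul
        (hφm.comp (measurable_pi_apply i))).aestronglyMeasurable (ae_of_all _ ?_)
    intro x
    rw [Real.norm_eq_abs, abs_of_nonneg (mul_nonneg (le_max_right _ _) (hφ0 _))]
    rcases eq_or_lt_of_le (hφ0 (x i)) with h | h
    · rw [← h, mul_zero]
      exact le_max_right _ _
    · have hxle : x i ≤ M := by
        by_contra hgt
        push_neg at hgt
        rw [hM] at hgt
        have : φ (x i) = 0 := by rw [hφ]; exact phi_of_gt μ hgt
        rw [this] at h
        exact lt_irrefl _ h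
      calc max (x i - K) 0 * φ (x i) ≤ max (M - K) 0 * 1 :=
          mul_le_mul (max_le_max (by linarith) le_rfl) (hφ1 _) (hφ0 _) (le_max_right _ _)
        _ = max (M - K) 0 := mul_one _
  set A := ∫ y, max (y - K) 0 * φ y ∂μ with hA
  -- key per-coordinate inequality
  have hkey_i : ∀ i : Fin n, ∫ x, x i * H x ∂P ≤ K * p + A := by
    intro i
    have hpt : ∀ x : Fin n → ℝ, x i * H x ≤ K * H x + max (x i - K) 0 * φ (x i) := by
      intro x
      rcases le_or_gt (x i) K with hle | hlt
      · have h1 : x i * H x ≤ K * H x := mul_le_mul_of_nonneg_right hle (hH0 x)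
        have h2 : 0 ≤ max (x i - K) 0 * φ (x i) := mul_nonneg (le_max_right _ _) (hφ0 _)
        linarith
      · have hHφ : H x ≤ φ (x i) := by
          rw [hH]
          calc ∏ j, φ (x j) = φ (x i) * ∏ j ∈ Finset.univ.erase i, φ (x j) :=
              (Finset.mul_prod_erase _ _ (Finset.mem_univ i)).symm
            _ ≤ φ (x i) * 1 := by
                refine mul_le_mul_of_nonneg_left ?_ (hφ0 _)
                exact Finset.prod_le_one (fun j _ => hφ0 _) (fun j _ => hφ1 _)
            _ = φ (x i) := mul_one _
        have h3 : (x i - K) * H x ≤ (x i - K) * φ (x i) :=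
          mul_le_mul_of_nonneg_left hHφ (by linarith)
        have hmax : max (x i - K) 0 = x i - K := max_eq_left (by linarith)
        rw [hmax]
        nlinarith
    have hAeq : ∫ x, max (x i - K) 0 * φ (x i) ∂P = A := by
      have := hmargint i (fun y => max (y - K) 0 * φ y) (((measurable_id.sub
        measurable_const).max measurable_const).mul hφm)
      simpa using this
    calc ∫ x, x i * H x ∂P ≤ ∫ x, (K * H x + max (x i - K) 0 * φ (x i)) ∂P :=
        integral_mono (hint_xiH i) ((hint_H.const_mul K).add (hint_max_i i)) hpt
      _ = K * p + A := by
        rw [integral_add (hint_H.const_mul K) (hint_max_i i), integral_const_mul, hAeq, ← hp]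
  -- sum identity
  have hsum_int : ∑ i, ∫ x, x i * H x ∂P = (n:ℝ) * c * p := by
    rw [← integral_finset_sum _ (fun i _ => hint_xiH i)]
    have hcongr : ∫ x, (∑ i, x i * H x) ∂P = ∫ x, ((n:ℝ) * c) * H x ∂P := by
      refine integral_congr_ae ?_
      filter_upwards [hae] with x hx
      rw [← Finset.sum_mul, hx]
    rw [hcongr, integral_const_mul, ← hp]
  have hcp : (n:ℝ) * c * p ≤ (n:ℝ) * (K * p + A) := by
    rw [← hsum_int]
    calc ∑ i, ∫ x, x i * H x ∂P ≤ ∑ _i : Fin n, (K * p + A) :=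
        Finset.sum_le_sum (fun i _ => hkey_i i)
      _ = (n:ℝ) * (K * p + A) := by
        rw [Finset.sum_const, Finset.card_univ, Fintype.card_fin, nsmul_eq_mul]
  have hcp' : c * p ≤ K * p + A := by
    nlinarith [hcp, hn0]
  -- HL bound
  set I := ∫ t in Set.Ioo a (1-α), quantile μ t with hI
  have hA_le : A ≤ I - K * (1 - α - a) := by
    rw [hA, hI, hK, hφ]
    exact hl_bound μ hα0 hα1 ha hab
  set L := 1 - α - a with hL
  have hL_pos : 0 < L := by rw [hL]; linarith
  have hpL : L ≤ p := by
    rw [hL, hexp]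
    linarith
  have hp_pos : 0 < p := lt_of_lt_of_le hL_pos hpL
  -- K * L ≤ I
  have hIq : IntegrableOn (quantile μ) (Set.Ioo a (1-α)) := by
    have hmono : MonotoneOn (quantile μ) (Set.uIcc a (1-α)) := by
      rw [Set.uIcc_of_le hab.le]
      exact (monotoneOn_quantile μ).mono
        (fun t ht => ⟨lt_of_lt_of_le ha ht.1, lt_of_le_of_lt ht.2 (by linarith)⟩)
    exact hmono.intervalIntegrable.1.mono_set Set.Ioo_subset_Ioc_self
  have hKL : K * L ≤ I := by
    have hconst : ∫ _t in Set.Ioo a (1-α), K = K * L := by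
      rw [setIntegral_const, smul_eq_mul, Real.volume_real_Ioo_of_le (by linarith), hL]
      ring
    rw [hI, ← hconst]
    refine setIntegral_mono_on
      (integrableOn_const (by simp [Real.volume_Ioo] : volume (Set.Ioo a (1-α)) < ⊤).ne)
      hIq measurableSet_Ioo ?_
    intro t ht
    rw [hK]
    exact monotoneOn_quantile μ ⟨ha, by linarith⟩ ⟨lt_trans ha ht.1, by linarith [ht.2]⟩ ht.1.le
  -- final algebra
  have e1 : c * p * L ≤ (K * p + A) * L := mul_le_mul_of_nonneg_right hcp' hL_pos.le
  have e2 : (K * p + A) * L ≤ (K * p + I - K * L) * L :=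
    mul_le_mul_of_nonneg_right (by linarith) hL_pos.le
  have e3 : (K * p + I - K * L) * L ≤ I * p := by
    have e3' : K * L * (p - L) ≤ I * (p - L) :=
      mul_le_mul_of_nonneg_right hKL (by linarith)
    nlinarith
  have hfin : (c * L) * p ≤ I * p := by nlinarith
  have hcL : c * L ≤ I := le_of_mul_le_mul_right hfin hp_pos
  -- rewrite avgQuantile
  have havg : avgQuantile μ a (1-α) = I / L := by
    rw [avgQuantile, intervalIntegral.integral_of_le hab.le, integral_Ioc_eq_integral_Ioo,
      ← hI, hL]
    rw [inv_mul_eq_div]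
  rw [havg, le_div_iff₀ hL_pos]
  linarith

end Main

section UQuantile
variable (μ : Measure ℝ) [IsProbabilityMeasure μ]

/-- the upper quantile function -/
noncomputable def uquantile (s : ℝ) : ℝ := sSup {y : ℝ | (μ (Set.Iio y)).toReal ≤ s}

lemma iio_le_cdf (y : ℝ) : (μ (Set.Iio y)).toReal ≤ cdf μ y := by
  rw [cdf_eq_real, measureReal_def]
  exact ENNReal.toReal_mono (measure_ne_top μ _) (measure_mono Set.Iio_subset_Iic_self)

lemma uq_nonempty {s : ℝ} (hs : 0 < s) : {y : ℝ | (μ (Set.Iio y)).toReal ≤ s}.Nonempty := by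
  obtain ⟨y, hy⟩ := ((tendsto_cdf_atBot μ).eventually (eventually_lt_nhds hs)).exists
  exact ⟨y, le_trans (iio_le_cdf μ y) hy.le⟩

lemma uq_bddAbove {s : ℝ} (hs1 : s < 1) : BddAbove {y : ℝ | (μ (Set.Iio y)).toReal ≤ s} := by
  obtain ⟨y0, hy0⟩ := ((tendsto_cdf_atTop μ).eventually (eventually_gt_nhds hs1)).exists
  refine ⟨y0 + 1, fun y hy => ?_⟩
  by_contra hgt
  push_neg at hgt
  have hsub : Set.Iic y0 ⊆ Set.Iio y := by
    intro z hz
    simp only [Set.mem_Iic] at hz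
    simp only [Set.mem_Iio]
    linarith
  have : cdf μ y0 ≤ (μ (Set.Iio y)).toReal := by
    rw [cdf_eq_real, measureReal_def]
    exact ENNReal.toReal_mono (measure_ne_top μ _) (measure_mono hsub)
  have hyle : (μ (Set.Iio y)).toReal ≤ s := hy
  linarith

lemma quantile_le_uquantile {s : ℝ} (hs0 : 0 < s) (hs1 : s < 1) :
    quantile μ s ≤ uquantile μ s := by
  rw [quantile_le_iff μ hs0 hs1]
  set Q := uquantile μ s with hQ
  have hIic : Set.Iic Q = ⋂ n : ℕ, Set.Iio (Q + ((n:ℝ)+1)⁻¹) := by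
    ext x
    simp only [Set.mem_Iic, Set.mem_iInter, Set.mem_Iio]
    constructor
    · intro hx n
      have : (0:ℝ) < ((n:ℝ)+1)⁻¹ := by positivity
      linarith
    · intro hx
      by_contra hgt
      push_neg at hgt
      obtain ⟨n, hn⟩ := exists_nat_gt (x - Q)⁻¹
      have h1 : (0:ℝ) < x - Q := by linarith
      have h2 : (x - Q)⁻¹ < (n:ℝ) + 1 := by linarith
      have h3 : ((n:ℝ)+1)⁻¹ < x - Q := by
        have := inv_strictAnti₀ (inv_pos.2 h1) h2
        rwa [inv_inv] at this
      have := hx n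
      linarith
  have key : ∀ n : ℕ, ENNReal.ofReal s ≤ μ (Set.Iio (Q + ((n:ℝ)+1)⁻¹)) := by
    intro n
    have hy : Q + ((n:ℝ)+1)⁻¹ ∉ {y : ℝ | (μ (Set.Iio y)).toReal ≤ s} := by
      intro hy
      have hle : Q + ((n:ℝ)+1)⁻¹ ≤ Q := le_csSup (uq_bddAbove μ hs1) hy
      have hpos : (0:ℝ) < ((n:ℝ)+1)⁻¹ := by positivity
      linarith
    simp only [Set.mem_setOf_eq, not_le] at hy
    exact le_trans (ENNReal.ofReal_le_ofReal hy.le)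
      (ENNReal.ofReal_toReal (measure_ne_top μ _)).le
  have hmeas_int : μ (Set.Iic Q) = ⨅ n : ℕ, μ (Set.Iio (Q + ((n:ℝ)+1)⁻¹)) := by
    rw [hIic]
    refine Antitone.measure_iInter ?_ (fun n => (measurableSet_Iio).nullMeasurableSet) ⟨0, measure_ne_top μ _⟩
    intro m k hmk
    apply Set.Iio_subset_Iio
    have hcast : (m:ℝ) ≤ (k:ℝ) := Nat.cast_le.2 hmk
    have : ((k:ℝ)+1)⁻¹ ≤ ((m:ℝ)+1)⁻¹ := by
      apply inv_anti₀ (by positivity)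
      linarith
    linarith
  have hofreal : ENNReal.ofReal s ≤ μ (Set.Iic Q) := by
    rw [hmeas_int]
    exact le_iInf key
  rw [cdf_eq_real, measureReal_def]
  exact (ENNReal.ofReal_le_iff_le_toReal (measure_ne_top μ _)).1 hofreal

lemma uquantile_le_quantile {s s' : ℝ} (hs0 : 0 < s) (hss' : s < s') (hs'1 : s' < 1) :
    uquantile μ s ≤ quantile μ s' := by
  refine csSup_le (uq_nonempty μ hs0) ?_
  intro y hy
  by_contra hgt
  push_neg at hgt
  have h1 : cdf μ (quantile μ s') ≤ (μ (Set.Iio y)).toReal := by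
    rw [cdf_eq_real, measureReal_def]
    exact ENNReal.toReal_mono (measure_ne_top μ _)
      (measure_mono (fun z hz => lt_of_le_of_lt hz hgt))
  have h2 := cdf_quantile_ge μ (lt_trans hs0 hss') hs'1
  have h3 : (μ (Set.Iio y)).toReal ≤ s := hy
  linarith

lemma uquantile_ae_eq : ∀ᵐ t ∂(volume : Measure ℝ),
    t ∈ Set.Ioo (0:ℝ) 1 → quantile μ t = uquantile μ t := by
  set E := {s : ℝ | s ∈ Set.Ioo (0:ℝ) 1 ∧ quantile μ s < uquantile μ s} with hE
  have hsub : E ⊆ ⋃ r : ℚ, {s : ℝ | s ∈ Set.Ioo (0:ℝ) 1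
      ∧ quantile μ s < (r:ℝ) ∧ (r:ℝ) < uquantile μ s} := by
    intro s hs
    obtain ⟨r, hr1, hr2⟩ := exists_rat_btwn hs.2
    exact Set.mem_iUnion.2 ⟨r, hs.1, hr1, hr2⟩
  have hcount : E.Countable := by
    refine Set.Countable.mono hsub (Set.countable_iUnion (fun r => ?_))
    refine Set.Subsingleton.countable ?_
    intro s hs s' hs'
    by_contra hne
    rcases lt_or_gt_of_ne hne with hlt | hlt
    · have := uquantile_le_quantile μ hs.1.1 hlt hs'.1.2
      linarith [hs.2.2, hs'.2.1]
    · have := uquantile_le_quantile μ hs'.1.1 hlt hs.1.2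
      linarith [hs'.2.2, hs.2.1]
  have hzero : (volume : Measure ℝ) E = 0 := hcount.measure_zero _
  have hae : ∀ᵐ t ∂(volume : Measure ℝ), t ∉ E := by
    rw [← measure_eq_zero_iff_ae_notMem] at *
    exact hzero
  filter_upwards [hae] with t ht hmem
  by_contra hne
  exact ht ⟨hmem, lt_of_le_of_ne (quantile_le_uquantile μ hmem.1 hmem.2) hne⟩

lemma integral_uquantile_eq {a b : ℝ} (ha : 0 ≤ a) (hb : b ≤ 1) :
    ∫ t in Set.Ioo a b, uquantile μ t = ∫ t in Set.Ioo a b, quantile μ t := by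
  refine (setIntegral_congr_ae measurableSet_Ioo ?_).symm
  filter_upwards [uquantile_ae_eq μ] with t ht hmem
  exact ht ⟨lt_of_le_of_lt ha hmem.1, lt_of_lt_of_le hmem.2 hb⟩

lemma map_neg_Iic (x : ℝ) : (μ.map (fun y : ℝ => -y)) (Set.Iic x) = μ (Set.Ici (-x)) := by
  rw [Measure.map_apply measurable_neg measurableSet_Iic]
  congr 1
  ext y
  simp [neg_le]

lemma quantile_map_neg (t : ℝ) :
    quantile (μ.map (fun y : ℝ => -y)) t = - uquantile μ (1 - t) := by
  have hset : {x : ℝ | t ≤ ((μ.map (fun y : ℝ => -y)) (Set.Iic x)).toReal}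
      = - {y : ℝ | (μ (Set.Iio y)).toReal ≤ 1 - t} := by
    ext x
    simp only [Set.mem_neg, Set.mem_setOf_eq]
    rw [map_neg_Iic μ]
    have hcompl : μ (Set.Ici (-x)) = 1 - μ (Set.Iio (-x)) := by
      rw [← Set.compl_Iio, measure_compl measurableSet_Iio (measure_ne_top μ _), measure_univ]
    rw [hcompl, ENNReal.toReal_sub_of_le prob_le_one ENNReal.one_ne_top, ENNReal.toReal_one]
    constructor <;> intro h <;> linarith
  rw [quantile, hset, Real.sInf_def, neg_neg]
  rfl

end UQuantile

section NegTransfer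

lemma mixable_neg {n : ℕ} {c : ℝ} (μ : Measure ℝ) [IsProbabilityMeasure μ]
    (h : IsCompletelyMixable n μ c) :
    IsCompletelyMixable n (μ.map (fun y : ℝ => -y)) (-c) := by
  obtain ⟨P, hP, hmarg, hsum⟩ := h
  have hF : Measurable (fun x : Fin n → ℝ => fun i => -(x i)) :=
    measurable_pi_lambda _ (fun i => (measurable_pi_apply i).neg)
  refine ⟨P.map (fun x i => -(x i)), Measure.isProbabilityMeasure_map hF.aemeasurable, ?_, ?_⟩
  · intro i
    have hmargi : P.map (fun x => x i) = μ := hmarg i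
    rw [Measure.map_map (measurable_pi_apply i) hF]
    have hcomp : ((fun x : Fin n → ℝ => x i) ∘ (fun x i => -(x i)))
        = (fun y : ℝ => -y) ∘ (fun x : Fin n → ℝ => x i) := rfl
    rw [hcomp, ← Measure.map_map (show Measurable (fun y : ℝ => -y) from measurable_neg)
      (measurable_pi_apply i), hmargi]
  · have hSmeas : MeasurableSet {x : Fin n → ℝ | ∑ i, x i = (n:ℝ) * (-c)} :=
      measurableSet_eq_fun (Finset.measurable_sum _ fun i _ => measurable_pi_apply i)
        measurable_const
    rw [Measure.map_apply hF hSmeas]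
    have hpre : (fun x : Fin n → ℝ => fun i => -(x i)) ⁻¹' {x | ∑ i, x i = (n:ℝ) * (-c)}
        = {x : Fin n → ℝ | ∑ i, x i = (n:ℝ) * c} := by
      ext x
      simp only [Set.mem_preimage, Set.mem_setOf_eq]
      rw [Finset.sum_neg_distrib, mul_neg, neg_inj]
    rw [hpre]
    exact hsum

lemma mixable_lower (n : ℕ) (hn : 2 ≤ n) (μ : Measure ℝ) [IsProbabilityMeasure μ]
    (c α : ℝ) (hα0 : 0 < α) (hαn : α < 1 / n) (hmix : IsCompletelyMixable n μ c) :
    avgQuantile μ α (1 - ((n:ℝ) - 1) * α) ≤ c := by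
  have hν : IsProbabilityMeasure (μ.map (fun y : ℝ => -y)) :=
    Measure.isProbabilityMeasure_map measurable_neg.aemeasurable
  have hup := mixable_upper n hn (μ.map (fun y : ℝ => -y)) (-c) α hα0 hαn (mixable_neg μ hmix)
  have hn0 : (0:ℝ) < n := by positivity
  have hn2 : (2:ℝ) ≤ (n:ℝ) := by exact_mod_cast hn
  have hαn' : (n:ℝ) * α < 1 := by
    rw [lt_div_iff₀ hn0] at hαn
    linarith
  have ha : 0 < ((n:ℝ)-1)*α := mul_pos (by linarith) hα0
  have hexp : ((n:ℝ)-1)*α = (n:ℝ)*α - α := by ring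
  have hab : ((n:ℝ)-1)*α < 1 - α := by rw [hexp]; linarith
  have hα1 : α < 1 := by nlinarith
  have key : avgQuantile (μ.map (fun y : ℝ => -y)) (((n:ℝ)-1)*α) (1-α)
      = - avgQuantile μ α (1 - ((n:ℝ)-1)*α) := by
    rw [avgQuantile, avgQuantile]
    have h1 : ∫ t in (((n:ℝ)-1)*α)..(1-α), quantile (μ.map (fun y : ℝ => -y)) t
        = - ∫ t in (((n:ℝ)-1)*α)..(1-α), uquantile μ (1 - t) := by
      rw [← intervalIntegral.integral_neg]
      refine intervalIntegral.integral_congr ?_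
      intro t _
      rw [quantile_map_neg μ t]
    have h2 : ∫ t in (((n:ℝ)-1)*α)..(1-α), uquantile μ (1 - t)
        = ∫ s in α..(1 - ((n:ℝ)-1)*α), uquantile μ s := by
      rw [intervalIntegral.integral_comp_sub_left (fun s => uquantile μ s) 1]
      have he : (1:ℝ) - (1-α) = α := by ring
      rw [he]
    have h3 : ∫ s in α..(1 - ((n:ℝ)-1)*α), uquantile μ s
        = ∫ s in α..(1 - ((n:ℝ)-1)*α), quantile μ s := by
      rw [intervalIntegral.integral_of_le (by linarith), intervalIntegral.integral_of_le (by linarith),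
        integral_Ioc_eq_integral_Ioo, integral_Ioc_eq_integral_Ioo]
      exact integral_uquantile_eq μ (le_of_lt hα0) (by linarith)
    rw [h1, h2, h3]
    have he2 : (1 - α - ((n:ℝ)-1)*α) = (1 - ((n:ℝ)-1)*α - α) := by ring
    rw [he2]
    ring
  rw [key] at hup
  linarith

end NegTransfer

section OneCase

lemma n1_case (μ : Measure ℝ) [IsProbabilityMeasure μ] (c : ℝ)
    (h : IsCompletelyMixable 1 μ c) : μ {c} = 1 := by
  obtain ⟨P, hP, hmarg, hsum⟩ := h
  have hmarg0 : P.map (fun x : Fin 1 → ℝ => x 0) = μ := hmarg 0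
  rw [← hmarg0, Measure.map_apply (measurable_pi_apply 0) (measurableSet_singleton c)]
  have hset : (fun x : Fin 1 → ℝ => x 0) ⁻¹' {c}
      = {x : Fin 1 → ℝ | ∑ i, x i = ((1:ℕ):ℝ) * c} := by
    ext x
    simp [Fin.sum_univ_one]
  rw [hset]
  exact hsum

lemma n1_quantile (μ : Measure ℝ) [IsProbabilityMeasure μ] (c : ℝ) (hc : μ {c} = 1) :
    ∀ t ∈ Set.Ioo (0:ℝ) 1, quantile μ t = c := by
  intro t ht
  have hcdf_ge : ∀ x, c ≤ x → cdf μ x = 1 := by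
    intro x hx
    rw [cdf_eq_real, measureReal_def]
    have h1 : μ (Set.Iic x) = 1 :=
      le_antisymm prob_le_one (hc ▸ measure_mono (Set.singleton_subset_iff.2 hx))
    simp [h1]
  have hcdf_lt : ∀ x, x < c → cdf μ x = 0 := by
    intro x hx
    rw [cdf_eq_real, measureReal_def]
    have hcompl : μ ({c}ᶜ) = 0 := by
      rw [measure_compl (measurableSet_singleton c) (measure_ne_top μ _), hc, measure_univ]
      simp
    have hsub : Set.Iic x ⊆ ({c} : Set ℝ)ᶜ := by
      intro z hz
      simp only [Set.mem_compl_iff, Set.mem_singleton_iff]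
      intro hzc
      rw [hzc] at hz
      exact absurd hz (not_le.2 hx)
    have h0 : μ (Set.Iic x) = 0 :=
      le_antisymm (le_trans (measure_mono hsub) hcompl.le) zero_le
    simp [h0]
  rw [quantile_eq_sInf_cdf]
  have hset : {x | t ≤ cdf μ x} = Set.Ici c := by
    ext x
    simp only [Set.mem_setOf_eq, Set.mem_Ici]
    constructor
    · intro hle
      by_contra hx
      push_neg at hx
      rw [hcdf_lt x hx] at hle
      linarith [ht.1]
    · intro hge
      rw [hcdf_ge x hge]
      linarith [ht.2]
  rw [hset, csInf_Ici]

lemma avg_of_const (μ : Measure ℝ) [IsProbabilityMeasure μ] {a b c : ℝ}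
    (h0 : 0 ≤ a) (hab : a < b) (hb : b ≤ 1)
    (hq : ∀ t ∈ Set.Ioo (0:ℝ) 1, quantile μ t = c) : avgQuantile μ a b = c := by
  rw [avgQuantile, intervalIntegral.integral_of_le hab.le, integral_Ioc_eq_integral_Ioo]
  have hcg : ∫ t in Set.Ioo a b, quantile μ t = ∫ _t in Set.Ioo a b, c :=
    setIntegral_congr_fun measurableSet_Ioo
      (fun t ht => hq t ⟨lt_of_le_of_lt h0 ht.1, lt_of_lt_of_le ht.2 hb⟩)
  rw [hcg, setIntegral_const, smul_eq_mul, Real.volume_real_Ioo_of_le (by linarith), ← mul_assoc,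
    inv_mul_cancel₀ (ne_of_gt (by linarith : (0:ℝ) < b - a)), one_mul]

end OneCase

theorem stmt10 (n : ℕ) (hn : 1 ≤ n) (μ : Measure ℝ) [IsProbabilityMeasure μ]
    (c : ℝ) (h : IsCompletelyMixable n μ c) :
    sSup ((fun α : ℝ => avgQuantile μ α (1 - ((n : ℝ) - 1) * α)) '' Set.Ioo 0 (1 / n)) ≤ c ∧
    c ≤ sInf ((fun α : ℝ => avgQuantile μ (((n : ℝ) - 1) * α) (1 - α)) '' Set.Ioo 0 (1 / n)) := by
  have hn0 : (0:ℝ) < n := by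
    have : 0 < n := by omega
    exact_mod_cast this
  have hmem : (1:ℝ)/(2*n) ∈ Set.Ioo (0:ℝ) (1/n) := by
    constructor
    · positivity
    · rw [div_lt_div_iff₀ (by positivity) hn0]
      nlinarith
  have hne1 : ((fun α : ℝ => avgQuantile μ α (1 - ((n : ℝ) - 1) * α)) '' Set.Ioo 0 (1/n)).Nonempty :=
    ⟨_, Set.mem_image_of_mem _ hmem⟩
  have hne2 : ((fun α : ℝ => avgQuantile μ (((n : ℝ) - 1) * α) (1 - α)) '' Set.Ioo 0 (1/n)).Nonempty :=
    ⟨_, Set.mem_image_of_mem _ hmem⟩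
  rcases eq_or_lt_of_le hn with h1 | h2
  · -- n = 1
    subst h1
    have hc := n1_case μ c h
    have hq := n1_quantile μ c hc
    constructor
    · refine csSup_le hne1 ?_
      rintro b ⟨α, hα, rfl⟩
      have hα1 : α < 1 := by
        have := hα.2
        simpa using this
      have harg : 1 - (((1:ℕ):ℝ) - 1)*α = 1 := by push_cast; ring
      show avgQuantile μ α (1 - (((1:ℕ):ℝ) - 1) * α) ≤ c
      rw [harg, avg_of_const μ hα.1.le hα1 le_rfl hq]
    · refine le_csInf hne2 ?_
      rintro b ⟨α, hα, rfl⟩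
      have hα1 : α < 1 := by
        have := hα.2
        simpa using this
      have harg : (((1:ℕ):ℝ) - 1)*α = 0 := by push_cast; ring
      show c ≤ avgQuantile μ ((((1:ℕ):ℝ) - 1) * α) (1 - α)
      rw [harg, avg_of_const μ le_rfl (by linarith) (by linarith [hα.1]) hq]
  · have hn2 : 2 ≤ n := h2
    constructor
    · refine csSup_le hne1 ?_
      rintro b ⟨α, hα, rfl⟩
      exact mixable_lower n hn2 μ c α hα.1 hα.2 h
    · refine le_csInf hne2 ?_
      rintro b ⟨α, hα, rfl⟩
      exact mixable_upper n hn2 μ c α hα.1 hα.2 h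
end

section
/- (Mean inequality.) Let μ be a Borel probability measure on ℝ with bounded support, let x = lim_{ε↓0} q_μ(ε) be its left end-point, y = lim_{ε↓0} q_μ(1−ε) its right end-point, and c = ∫ z dμ(z) its mean. If μ is n-completely mixable, then y + (n−1)x ≤ nc ≤ x + (n−1)y. -/
open MeasureTheory ENNReal

set_option linter.unusedSectionVars false

section Aux
variable {μ : Measure ℝ} [IsProbabilityMeasure μ] {M : ℝ}

lemma iicM (hbdd : μ {z : ℝ | |z| ≤ M}ᶜ = 0) : μ (Set.Iic M) = 1 := by
  rw [← prob_compl_eq_zero_iff measurableSet_Iic]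
  refine measure_mono_null (fun z hz => ?_) hbdd
  simp only [Set.mem_compl_iff, Set.mem_Iic, not_le, Set.mem_setOf_eq] at *
  exact lt_of_lt_of_le hz (le_abs_self z)

lemma mem_S (hbdd : μ {z : ℝ | |z| ≤ M}ᶜ = 0) {t : ℝ} (ht : t ≤ 1) :
    M ∈ {w : ℝ | t ≤ (μ (Set.Iic w)).toReal} := by
  simp [iicM hbdd, ht]

omit [IsProbabilityMeasure μ] in
lemma bdd_S (hbdd : μ {z : ℝ | |z| ≤ M}ᶜ = 0) {t : ℝ} (ht : 0 < t) :
    BddBelow {w : ℝ | t ≤ (μ (Set.Iic w)).toReal} := by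
  refine ⟨-M - 1, fun w hw => ?_⟩
  by_contra hlt
  push_neg at hlt
  have h0 : μ (Set.Iic w) = 0 := by
    refine measure_mono_null (fun z hz => ?_) hbdd
    simp only [Set.mem_Iic, Set.mem_compl_iff, Set.mem_setOf_eq, not_le] at *
    have : z < -M - 1 := lt_of_le_of_lt hz hlt
    calc M < -z - 1 := by linarith
    _ ≤ |z| - 1 := by have := neg_le_abs z; linarith
    _ ≤ |z| := by linarith
  simp only [Set.mem_setOf_eq, h0] at hw
  simpa using lt_of_lt_of_le ht hw

lemma quantile_le (hbdd : μ {z : ℝ | |z| ≤ M}ᶜ = 0) {t w : ℝ} (ht : 0 < t)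
    (hw : t ≤ (μ (Set.Iic w)).toReal) : quantile μ t ≤ w :=
  csInf_le (bdd_S hbdd ht) hw

lemma lt_quantile (hbdd : μ {z : ℝ | |z| ≤ M}ᶜ = 0) {t w : ℝ} (ht : 0 < t)
    (hw : w < quantile μ t) : (μ (Set.Iic w)).toReal < t := by
  by_contra h
  push_neg at h
  exact absurd (quantile_le hbdd ht h) (not_le.2 hw)


lemma F_mono {w v : ℝ} (h : w ≤ v) :
    (μ (Set.Iic w)).toReal ≤ (μ (Set.Iic v)).toReal :=
  ENNReal.toReal_mono (measure_ne_top _ _) (measure_mono (Set.Iic_subset_Iic.2 h))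

omit [IsProbabilityMeasure μ] in
lemma measure_Iio_le_s11 {a : ℝ} {C : ℝ≥0∞} (h : ∀ w, w < a → μ (Set.Iic w) ≤ C) :
    μ (Set.Iio a) ≤ C := by
  have heq : Set.Iio a = ⋃ k : ℕ, Set.Iic (a - ((k : ℝ) + 1)⁻¹) := by
    ext z
    simp only [Set.mem_Iio, Set.mem_iUnion, Set.mem_Iic]
    constructor
    · intro hz
      obtain ⟨k, hk⟩ := exists_nat_one_div_lt (sub_pos.2 hz)
      exact ⟨k, by rw [one_div] at hk; linarith⟩
    · rintro ⟨k, hk⟩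
      have : (0:ℝ) < ((k:ℝ)+1)⁻¹ := by positivity
      linarith
  have hmono : Monotone (fun k : ℕ => Set.Iic (a - ((k : ℝ) + 1)⁻¹)) := by
    intro k m hkm
    apply Set.Iic_subset_Iic.2
    have : ((m:ℝ)+1)⁻¹ ≤ ((k:ℝ)+1)⁻¹ := by
      apply inv_anti₀ (by positivity)
      exact_mod_cast by omega
    linarith
  rw [heq, hmono.measure_iUnion]
  exact iSup_le fun k => h _ (sub_lt_self a (by positivity))

lemma measure_Iic_ge {a : ℝ} {C : ℝ≥0∞} (h : ∀ w, a < w → C ≤ μ (Set.Iic w)) :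
    C ≤ μ (Set.Iic a) := by
  have heq : Set.Iic a = ⋂ k : ℕ, Set.Iic (a + ((k : ℝ) + 1)⁻¹) := by
    ext z
    simp only [Set.mem_Iic, Set.mem_iInter]
    constructor
    · intro hz k
      have : (0:ℝ) < ((k:ℝ)+1)⁻¹ := by positivity
      linarith
    · intro hz
      by_contra hza
      push_neg at hza
      obtain ⟨k, hk⟩ := exists_nat_one_div_lt (sub_pos.2 hza)
      rw [one_div] at hk
      have := hz k
      linarith
  have hanti : Antitone (fun k : ℕ => Set.Iic (a + ((k : ℝ) + 1)⁻¹)) := by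
    intro k m hkm
    apply Set.Iic_subset_Iic.2
    have : ((m:ℝ)+1)⁻¹ ≤ ((k:ℝ)+1)⁻¹ := by
      apply inv_anti₀ (by positivity)
      exact_mod_cast by omega
    linarith
  rw [heq, Directed.measure_iInter (fun k => measurableSet_Iic.nullMeasurableSet)
      (hanti.directed_ge) ⟨0, measure_ne_top _ _⟩]
  exact le_iInf fun k => h _ (lt_add_of_pos_right a (by positivity))

lemma Iio_x_null (hbdd : μ {z : ℝ | |z| ≤ M}ᶜ = 0) {x : ℝ}
    (hx : Filter.Tendsto (fun ε => quantile μ ε) (nhdsWithin 0 (Set.Ioi 0)) (nhds x)) :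
    μ (Set.Iio x) = 0 := by
  refine le_antisymm (measure_Iio_le_s11 fun w hw => le_of_eq ?_) (zero_le)
  by_contra h0
  have hb : 0 < (μ (Set.Iic w)).toReal :=
    ENNReal.toReal_pos h0 (measure_ne_top _ _)
  set b := (μ (Set.Iic w)).toReal with hbdef
  have hev : ∀ᶠ ε in nhdsWithin (0:ℝ) (Set.Ioi 0), quantile μ ε ≤ w := by
    filter_upwards [Ioc_mem_nhdsGT_of_mem
      (Set.mem_Ico.2 ⟨le_refl (0:ℝ), lt_min hb one_pos⟩)] with ε hε
    exact quantile_le hbdd hε.1 (le_trans hε.2 (min_le_left _ _))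
  exact absurd (le_of_tendsto hx hev) (not_le.2 hw)

lemma Ioi_y_null (hbdd : μ {z : ℝ | |z| ≤ M}ᶜ = 0) {y : ℝ}
    (hy : Filter.Tendsto (fun ε => quantile μ (1 - ε)) (nhdsWithin 0 (Set.Ioi 0)) (nhds y)) :
    μ (Set.Ioi y) = 0 := by
  have key : ∀ w, y < w → μ (Set.Ioi w) = 0 := by
    intro w hw
    by_contra h0
    have hb : 0 < (μ (Set.Ioi w)).toReal := ENNReal.toReal_pos h0 (measure_ne_top _ _)
    set b := (μ (Set.Ioi w)).toReal with hbdef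
    have hsum : (μ (Set.Iic w)).toReal + b = 1 := by
      have h1 : μ (Set.Iic w) + μ (Set.Ioi w) = 1 := by
        rw [← Set.compl_Iic]
        rw [measure_add_measure_compl measurableSet_Iic, measure_univ]
      have := congrArg ENNReal.toReal h1
      rwa [ENNReal.toReal_add (measure_ne_top _ _) (measure_ne_top _ _),
        ENNReal.toReal_one] at this
    have hFw : (μ (Set.Iic w)).toReal = 1 - b := by linarith
    have hev : ∀ᶠ ε in nhdsWithin (0:ℝ) (Set.Ioi 0), w ≤ quantile μ (1 - ε) := by
      filter_upwards [Ioo_mem_nhdsGT_of_mem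
        (Set.mem_Ico.2 ⟨le_refl (0:ℝ), lt_min hb one_pos⟩)] with ε hε
      have hεb : ε < b := lt_of_lt_of_le hε.2 (min_le_left _ _)
      have hε1 : ε < 1 := lt_of_lt_of_le hε.2 (min_le_right _ _)
      refine le_csInf ⟨M, mem_S hbdd (by linarith [hε.1])⟩ fun v hv => ?_
      by_contra hvw
      push_neg at hvw
      have : (μ (Set.Iic v)).toReal ≤ (μ (Set.Iic w)).toReal := F_mono (le_of_lt hvw)
      rw [hFw] at this
      have := hv
      simp only [Set.mem_setOf_eq] at this ⊢
      have h2 : (1 : ℝ) - ε ≤ (μ (Set.Iic v)).toReal := hv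
      have h3 : (μ (Set.Iic v)).toReal ≤ 1 - b := by
        have := F_mono (μ := μ) (le_of_lt hvw); rw [hFw] at this; exact this
      linarith
    exact absurd (ge_of_tendsto hy hev) (not_le.2 hw)
  refine le_antisymm ?_ (zero_le)
  have heq : Set.Ioi y ⊆ ⋃ k : ℕ, Set.Ioi (y + ((k : ℝ) + 1)⁻¹) := by
    intro z hz
    obtain ⟨k, hk⟩ := exists_nat_one_div_lt (sub_pos.2 (show y < z from hz))
    rw [one_div] at hk
    exact Set.mem_iUnion.2 ⟨k, by simp only [Set.mem_Ioi]; linarith⟩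
  calc μ (Set.Ioi y) ≤ μ (⋃ k : ℕ, Set.Ioi (y + ((k : ℝ) + 1)⁻¹)) := measure_mono heq
  _ = 0 := measure_iUnion_null fun k => key _ (lt_add_of_pos_right y (by positivity))


lemma Ici_quantile_ne_zero (hbdd : μ {z : ℝ | |z| ≤ M}ᶜ = 0) {ε : ℝ}
    (hε : 0 < ε) (hε1 : ε < 1) : μ (Set.Ici (quantile μ (1 - ε))) ≠ 0 := by
  intro h0
  have h1 : μ (Set.Iio (quantile μ (1 - ε))) = 1 :=
    (prob_compl_eq_zero_iff measurableSet_Iio).1 (by rw [Set.compl_Iio]; exact h0)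
  have h2 : μ (Set.Iio (quantile μ (1 - ε))) ≤ ENNReal.ofReal (1 - ε) := by
    refine measure_Iio_le_s11 fun w hw => ?_
    have hlt := lt_quantile hbdd (by linarith : (0:ℝ) < 1 - ε) hw
    exact (ENNReal.le_ofReal_iff_toReal_le (measure_ne_top _ _) (by linarith)).2
      (le_of_lt hlt)
  rw [h1] at h2
  exact absurd (lt_of_le_of_lt h2 (ENNReal.ofReal_lt_one.2 (by linarith))) (lt_irrefl _)

lemma Iic_quantile_ne_zero (hbdd : μ {z : ℝ | |z| ≤ M}ᶜ = 0) {ε : ℝ}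
    (hε : 0 < ε) (hε1 : ε ≤ 1) : μ (Set.Iic (quantile μ ε)) ≠ 0 := by
  have h : ENNReal.ofReal ε ≤ μ (Set.Iic (quantile μ ε)) := by
    refine measure_Iic_ge fun w hw => ?_
    obtain ⟨v, hv, hvw⟩ := exists_lt_of_csInf_lt ⟨M, mem_S hbdd hε1⟩ hw
    exact ENNReal.ofReal_le_of_le_toReal (le_trans hv (F_mono (le_of_lt hvw)))
  intro h0
  rw [h0, le_zero_iff, ENNReal.ofReal_eq_zero] at h
  linarith

end Aux

theorem stmt11' (n : ℕ) (hn : 1 ≤ n) (μ : Measure ℝ) [IsProbabilityMeasure μ]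
    (M : ℝ) (hbdd : μ {z : ℝ | |z| ≤ M}ᶜ = 0)
    (x y c : ℝ)
    (hx : Filter.Tendsto (fun ε => quantile μ ε) (nhdsWithin 0 (Set.Ioi 0)) (nhds x))
    (hy : Filter.Tendsto (fun ε => quantile μ (1 - ε)) (nhdsWithin 0 (Set.Ioi 0)) (nhds y))
    (hc : c = ∫ z, z ∂μ)
    (hCM : ∃ c', ∃ P : Measure (Fin n → ℝ), IsProbabilityMeasure P ∧
      (∀ i : Fin n, P.map (fun x => x i) = μ) ∧
      P {x : Fin n → ℝ | ∑ i, x i = (n : ℝ) * c'} = 1) :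
    y + ((n : ℝ) - 1) * x ≤ n * c ∧ (n : ℝ) * c ≤ x + ((n : ℝ) - 1) * y := by
  obtain ⟨c', P, hP, hmarg, hsum⟩ := hCM
  have hn0 : (0:ℝ) < n := by exact_mod_cast hn
  have hmargs : ∀ (i : Fin n) (s : Set ℝ), MeasurableSet s →
      P ((fun ω : Fin n → ℝ => ω i) ⁻¹' s) = μ s := by
    intro i s hs
    rw [← Measure.map_apply (measurable_pi_apply i) hs, hmarg i]
  -- integrability
  have hintμ : Integrable (fun z : ℝ => z) μ := by
    refine (integrable_const M).mono' aestronglyMeasurable_id ?_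
    rw [ae_iff]
    refine measure_mono_null (fun z hz => ?_) hbdd
    simp only [Set.mem_setOf_eq, not_le, Real.norm_eq_abs, Set.mem_compl_iff] at hz ⊢
    exact hz
  have hinti : ∀ i : Fin n, Integrable (fun ω : Fin n → ℝ => ω i) P := by
    intro i
    have h1 : Integrable (fun z : ℝ => z) (P.map (fun ω : Fin n → ℝ => ω i)) := by
      rw [hmarg i]; exact hintμ
    exact (integrable_map_measure h1.aestronglyMeasurable
      (measurable_pi_apply i).aemeasurable).1 h1
  have hIeq : ∀ i : Fin n, ∫ ω, ω i ∂P = c := by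
    intro i
    have h1 : Integrable (fun z : ℝ => z) (P.map (fun ω : Fin n → ℝ => ω i)) := by
      rw [hmarg i]; exact hintμ
    have h2 : ∫ z, z ∂(P.map (fun ω : Fin n → ℝ => ω i)) = ∫ ω, ω i ∂P :=
      integral_map (φ := fun ω : Fin n → ℝ => ω i) (f := fun z : ℝ => z) (measurable_pi_apply i).aemeasurable
        h1.aestronglyMeasurable
    rw [← h2, hmarg i, hc]
  have hmeasS : MeasurableSet {ω : Fin n → ℝ | ∑ i, ω i = (n : ℝ) * c'} := by
    have hms : Measurable (fun ω : Fin n → ℝ => ∑ i, ω i) :=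
      Finset.measurable_sum _ (fun i _ => measurable_pi_apply i)
    exact measurableSet_eq_fun hms measurable_const
  have hScompl : P {ω : Fin n → ℝ | ∑ i, ω i = (n : ℝ) * c'}ᶜ = 0 :=
    (prob_compl_eq_zero_iff hmeasS).2 hsum
  have hae : ∀ᵐ ω ∂P, ∑ i, ω i = (n : ℝ) * c' := by
    rw [ae_iff]; exact hScompl
  have hcc : c' = c := by
    have h1 : ∫ ω, (∑ i, ω i) ∂P = ∑ i : Fin n, ∫ ω, ω i ∂P :=
      integral_finset_sum _ (fun i _ => hinti i)
    have h2 : ∫ ω, (∑ i, ω i) ∂P = (n:ℝ) * c' := by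
      rw [integral_congr_ae hae, integral_const, probReal_univ]
      simp
    rw [h2] at h1
    have h3 : ∑ i : Fin n, ∫ ω, ω i ∂P = (n:ℝ) * c := by
      simp only [hIeq, Finset.sum_const, Finset.card_univ, Fintype.card_fin,
        nsmul_eq_mul]
    rw [h3] at h1
    exact mul_left_cancel₀ (ne_of_gt hn0) h1
  have hIio : μ (Set.Iio x) = 0 := Iio_x_null hbdd hx
  have hIoi : μ (Set.Ioi y) = 0 := Ioi_y_null hbdd hy
  set i0 : Fin n := ⟨0, hn⟩ with hi0
  have hPBx : P {ω : Fin n → ℝ | ¬ ∀ i, x ≤ ω i} = 0 := by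
    have hsub : {ω : Fin n → ℝ | ¬ ∀ i, x ≤ ω i} ⊆
        ⋃ i : Fin n, (fun ω : Fin n → ℝ => ω i) ⁻¹' Set.Iio x := by
      intro ω hω
      simp only [Set.mem_setOf_eq, not_forall, not_le] at hω
      obtain ⟨i, hi⟩ := hω
      exact Set.mem_iUnion.2 ⟨i, hi⟩
    refine measure_mono_null hsub (measure_iUnion_null fun i => ?_)
    rw [hmargs i _ measurableSet_Iio]; exact hIio
  have hPBy : P {ω : Fin n → ℝ | ¬ ∀ i, ω i ≤ y} = 0 := by
    have hsub : {ω : Fin n → ℝ | ¬ ∀ i, ω i ≤ y} ⊆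
        ⋃ i : Fin n, (fun ω : Fin n → ℝ => ω i) ⁻¹' Set.Ioi y := by
      intro ω hω
      simp only [Set.mem_setOf_eq, not_forall, not_le] at hω
      obtain ⟨i, hi⟩ := hω
      exact Set.mem_iUnion.2 ⟨i, hi⟩
    refine measure_mono_null hsub (measure_iUnion_null fun i => ?_)
    rw [hmargs i _ measurableSet_Ioi]; exact hIoi
  have hcard : (Finset.univ.erase i0).card = n - 1 := by
    rw [Finset.card_erase_of_mem (Finset.mem_univ _), Finset.card_univ, Fintype.card_fin]
  -- generic nonemptiness extraction
  have hpick : ∀ (A : Set (Fin n → ℝ)) (Q : (Fin n → ℝ) → Prop), P A ≠ 0 →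
      P {ω : Fin n → ℝ | ¬ Q ω} = 0 →
      ∃ ω : Fin n → ℝ, ω ∈ A ∧ (∑ i, ω i = (n : ℝ) * c') ∧ Q ω := by
    intro A Q hA hQ
    have hsub : A ⊆ (A ∩ {ω | (∑ i, ω i = (n : ℝ) * c') ∧ Q ω}) ∪
        ({ω : Fin n → ℝ | ∑ i, ω i = (n : ℝ) * c'}ᶜ ∪ {ω : Fin n → ℝ | ¬ Q ω}) := by
      intro ω hω
      by_cases h1 : ∑ i, ω i = (n : ℝ) * c'
      · by_cases h2 : Q ω
        · exact Or.inl ⟨hω, h1, h2⟩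
        · exact Or.inr (Or.inr h2)
      · exact Or.inr (Or.inl h1)
    have hne : P (A ∩ {ω | (∑ i, ω i = (n : ℝ) * c') ∧ Q ω}) ≠ 0 := by
      intro h0
      apply hA
      refine le_antisymm ?_ (zero_le)
      calc P A ≤ P ((A ∩ {ω | (∑ i, ω i = (n : ℝ) * c') ∧ Q ω}) ∪
          ({ω : Fin n → ℝ | ∑ i, ω i = (n : ℝ) * c'}ᶜ ∪ {ω : Fin n → ℝ | ¬ Q ω})) :=
            measure_mono hsub
      _ ≤ P (A ∩ {ω | (∑ i, ω i = (n : ℝ) * c') ∧ Q ω}) +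
          P ({ω : Fin n → ℝ | ∑ i, ω i = (n : ℝ) * c'}ᶜ ∪ {ω : Fin n → ℝ | ¬ Q ω}) :=
            measure_union_le _ _
      _ ≤ P (A ∩ {ω | (∑ i, ω i = (n : ℝ) * c') ∧ Q ω}) +
          (P {ω : Fin n → ℝ | ∑ i, ω i = (n : ℝ) * c'}ᶜ + P {ω : Fin n → ℝ | ¬ Q ω}) := by
            gcongr
            exact measure_union_le _ _
      _ = 0 := by rw [h0, hScompl, hQ]; simp
    obtain ⟨ω, hω⟩ := nonempty_of_measure_ne_zero hne
    exact ⟨ω, hω.1, hω.2.1, hω.2.2⟩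
  constructor
  · -- y + (n-1) x ≤ n c
    have key1 : ∀ ε ∈ Set.Ioo (0:ℝ) 1,
        quantile μ (1-ε) + ((n:ℝ)-1) * x ≤ (n:ℝ) * c := by
      rintro ε ⟨hε0, hε1⟩
      obtain ⟨ω, hωA, hωS, hωB⟩ := hpick
        ((fun ω : Fin n → ℝ => ω i0) ⁻¹' Set.Ici (quantile μ (1-ε)))
        (fun ω => ∀ i, x ≤ ω i)
        (by rw [hmargs i0 _ measurableSet_Ici]
            exact Ici_quantile_ne_zero hbdd hε0 hε1)
        hPBx
      have hsum_eq : ∑ i, ω i = (n:ℝ) * c := by rw [← hcc]; exact hωS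
      have hsplit : ω i0 + ∑ i ∈ Finset.univ.erase i0, ω i = ∑ i, ω i :=
        Finset.add_sum_erase _ _ (Finset.mem_univ i0)
      have hbound : ((n:ℝ) - 1) * x ≤ ∑ i ∈ Finset.univ.erase i0, ω i := by
        have h := Finset.card_nsmul_le_sum (Finset.univ.erase i0) ω x (fun i _ => hωB i)
        rw [hcard, nsmul_eq_mul, Nat.cast_sub hn, Nat.cast_one] at h
        exact h
      have hωA' : quantile μ (1-ε) ≤ ω i0 := hωA
      linarith
    have htd : Filter.Tendsto (fun ε => quantile μ (1-ε) + ((n:ℝ)-1)*x)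
        (nhdsWithin 0 (Set.Ioi 0)) (nhds (y + ((n:ℝ)-1)*x)) := hy.add_const _
    refine le_of_tendsto htd ?_
    filter_upwards [Ioo_mem_nhdsGT_of_mem (Set.mem_Ico.2 ⟨le_refl (0:ℝ), one_pos⟩)]
      with ε hε
    exact key1 ε hε
  · -- n c ≤ x + (n-1) y
    have key2 : ∀ ε ∈ Set.Ioo (0:ℝ) 1,
        (n:ℝ) * c ≤ quantile μ ε + ((n:ℝ)-1) * y := by
      rintro ε ⟨hε0, hε1⟩
      obtain ⟨ω, hωA, hωS, hωB⟩ := hpick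
        ((fun ω : Fin n → ℝ => ω i0) ⁻¹' Set.Iic (quantile μ ε))
        (fun ω => ∀ i, ω i ≤ y)
        (by rw [hmargs i0 _ measurableSet_Iic]
            exact Iic_quantile_ne_zero hbdd hε0 (le_of_lt hε1))
        hPBy
      have hsum_eq : ∑ i, ω i = (n:ℝ) * c := by rw [← hcc]; exact hωS
      have hsplit : ω i0 + ∑ i ∈ Finset.univ.erase i0, ω i = ∑ i, ω i :=
        Finset.add_sum_erase _ _ (Finset.mem_univ i0)
      have hbound : ∑ i ∈ Finset.univ.erase i0, ω i ≤ ((n:ℝ) - 1) * y := by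
        have h := Finset.sum_le_card_nsmul (Finset.univ.erase i0) ω y (fun i _ => hωB i)
        rw [hcard, nsmul_eq_mul, Nat.cast_sub hn, Nat.cast_one] at h
        exact h
      have hωA' : ω i0 ≤ quantile μ ε := hωA
      linarith
    have htd : Filter.Tendsto (fun ε => quantile μ ε + ((n:ℝ)-1)*y)
        (nhdsWithin 0 (Set.Ioi 0)) (nhds (x + ((n:ℝ)-1)*y)) := hx.add_const _
    refine ge_of_tendsto htd ?_
    filter_upwards [Ioo_mem_nhdsGT_of_mem (Set.mem_Ico.2 ⟨le_refl (0:ℝ), one_pos⟩)]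
      with ε hε
    exact key2 ε hε


theorem stmt11 (n : ℕ) (hn : 1 ≤ n) (μ : Measure ℝ) [IsProbabilityMeasure μ]
    (M : ℝ) (hbdd : μ {z : ℝ | |z| ≤ M}ᶜ = 0)
    (x y c : ℝ)
    (hx : Filter.Tendsto (fun ε => quantile μ ε) (nhdsWithin 0 (Set.Ioi 0)) (nhds x))
    (hy : Filter.Tendsto (fun ε => quantile μ (1 - ε)) (nhdsWithin 0 (Set.Ioi 0)) (nhds y))
    (hc : c = ∫ z, z ∂μ)
    (hCM : ∃ c', IsCompletelyMixable n μ c') :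
    y + ((n : ℝ) - 1) * x ≤ n * c ∧ (n : ℝ) * c ≤ x + ((n : ℝ) - 1) * y := by
  exact stmt11' n hn μ M hbdd x y c hx hy hc hCM
end

section
/- Let μ₁,…,μₙ be Borel probability measures on ℝ whose means m₁,…,mₙ exist in (−∞, ∞] (i.e., the negative part of the identity function is integrable with respect to each μᵢ), and suppose mᵢ = ∞ for at least one i. Then (μ₁,…,μₙ) is not jointly mixable. In particular, a Borel probability measure on ℝ whose mean exists and equals +∞ (or −∞) is not n-completely mixable for any n ∈ ℕ. -/
open MeasureTheory ENNReal

theorem key_no_joint_mix (n : ℕ) (μ : Fin n → Measure ℝ)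
    (hneg : ∀ i, Integrable (fun x : ℝ => min x 0) (μ i))
    (hinf : ∃ i, ¬ Integrable (fun x : ℝ => x) (μ i)) (C : ℝ)
    (hjm : ∃ P : Measure (Fin n → ℝ), IsProbabilityMeasure P ∧
      (∀ i, P.map (fun x => x i) = μ i) ∧ P {x | ∑ i, x i = C} = 1) : False := by
  obtain ⟨P, hP, hmap, hone⟩ := hjm
  obtain ⟨j, hj⟩ := hinf
  have hmeas : ∀ i : Fin n, Measurable (fun x : Fin n → ℝ => x i) :=
    fun i => measurable_pi_apply i
  have hminP : ∀ i, Integrable (fun x : Fin n → ℝ => min (x i) 0) P := by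
    intro i
    have h := hneg i
    rw [← hmap i] at h
    exact (integrable_map_measure (measurable_id.min measurable_const).aestronglyMeasurable (hmeas i).aemeasurable).mp h
  have hs : MeasurableSet {x : Fin n → ℝ | ∑ i, x i = C} :=
    measurableSet_eq_fun (by fun_prop) measurable_const
  have hae : ∀ᵐ x ∂P, ∑ i, x i = C := by
    rw [ae_iff]
    have h2 : {x : Fin n → ℝ | ¬ ∑ i, x i = C} = {x | ∑ i, x i = C}ᶜ := rfl
    rw [h2, measure_compl hs (measure_ne_top _ _), hone, measure_univ, tsub_self]
  have hg : Integrable (fun x : Fin n → ℝ => C - ∑ i ∈ Finset.univ.erase j, min (x i) 0) P :=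
    (integrable_const C).sub (integrable_finset_sum _ (fun i _ => hminP i))
  have hbd : ∀ᵐ x ∂P,
      ‖max (x j) 0‖ ≤ |C - ∑ i ∈ Finset.univ.erase j, min (x i) 0| := by
    filter_upwards [hae] with x hx
    have h1 : x j + ∑ i ∈ Finset.univ.erase j, x i = C := by
      rw [Finset.add_sum_erase Finset.univ (fun i => x i) (Finset.mem_univ j), hx]
    have h2 : ∑ i ∈ Finset.univ.erase j, min (x i) 0 ≤ ∑ i ∈ Finset.univ.erase j, x i :=
      Finset.sum_le_sum (fun i _ => min_le_left _ _)
    have h3 : x j ≤ C - ∑ i ∈ Finset.univ.erase j, min (x i) 0 := by linarith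
    rw [Real.norm_of_nonneg (le_max_right _ _)]
    exact max_le (h3.trans (le_abs_self _)) (abs_nonneg _)
  have hmaxP : Integrable (fun x : Fin n → ℝ => max (x j) 0) P :=
    Integrable.mono' hg.abs ((hmeas j).max measurable_const).aestronglyMeasurable hbd
  have hx : Integrable (fun x : Fin n → ℝ => x j) P := by
    have heq : (fun x : Fin n → ℝ => x j) = fun x => max (x j) 0 + min (x j) 0 := by
      funext x; rw [max_add_min, add_zero]
    rw [heq]; exact hmaxP.add (hminP j)
  apply hj
  rw [← hmap j]
  exact (integrable_map_measure measurable_id.aestronglyMeasurable (hmeas j).aemeasurable).mpr hx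

theorem stmt12 (n : ℕ) (μ : Fin n → Measure ℝ) (hprob : ∀ i, IsProbabilityMeasure (μ i))
    (hneg : ∀ i, Integrable (fun x : ℝ => min x 0) (μ i))
    (hinf : ∃ i, ¬ Integrable (fun x : ℝ => x) (μ i)) :
    (∀ C : ℝ, ¬ IsJointMix n μ C) ∧
    ∀ (ν : Measure ℝ), IsProbabilityMeasure ν → ∀ m : ℕ, 1 ≤ m →
      (Integrable (fun x : ℝ => min x 0) ν ∨ Integrable (fun x : ℝ => max x 0) ν) →
      ¬ Integrable (fun x : ℝ => x) ν →
      ∀ c : ℝ, ¬ IsCompletelyMixable m ν c := by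
  constructor
  · exact fun C h => key_no_joint_mix n μ hneg hinf C h
  · rintro ν hν m hm hminmax hid c hcm
    obtain ⟨P, hP, hmap, hone⟩ := hcm
    rcases hminmax with hmin | hmax
    · exact key_no_joint_mix m (fun _ => ν) (fun _ => hmin) ⟨⟨0, hm⟩, hid⟩ (m * c)
        ⟨P, hP, hmap, hone⟩
    · set T : (Fin m → ℝ) → (Fin m → ℝ) := fun x i => -(x i) with hT
      have hTm : Measurable T := measurable_pi_lambda _ (fun i => (measurable_pi_apply i).neg)
      have hnegm : Measurable (Neg.neg : ℝ → ℝ) := measurable_neg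
      refine key_no_joint_mix m (fun _ => ν.map Neg.neg) (fun _ => ?_) ⟨⟨0, hm⟩, ?_⟩
        (-(m * c)) ⟨P.map T, ?_, ?_, ?_⟩
      · show Integrable (fun x : ℝ => min x 0) (ν.map Neg.neg)
        have hfm : AEStronglyMeasurable (fun x : ℝ => min x 0) (ν.map Neg.neg) :=
          (measurable_id'.min measurable_const).aestronglyMeasurable
        refine (integrable_map_measure hfm hnegm.aemeasurable).mpr ?_
        have heq : ((fun x : ℝ => min x 0) ∘ Neg.neg) = fun x : ℝ => -(max x 0) := by
          funext x
          simp only [Function.comp, min_def, max_def]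
          split_ifs with h1 h2 h2 <;> linarith
        rw [heq]
        exact hmax.neg
      · show ¬ Integrable (fun x : ℝ => x) (ν.map Neg.neg)
        intro h
        have hfm : AEStronglyMeasurable (fun x : ℝ => x) (ν.map Neg.neg) :=
          measurable_id'.aestronglyMeasurable
        have h2 := (integrable_map_measure hfm hnegm.aemeasurable).mp h
        have h3 : Integrable (fun x : ℝ => -x) ν := h2
        have h4 : Integrable (fun x : ℝ => -(-x)) ν := h3.neg
        exact hid (by simpa using h4)
      · exact Measure.isProbabilityMeasure_map hTm.aemeasurable
      · intro i
        rw [Measure.map_map (measurable_pi_apply i) hTm]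
        have heq : (fun x : Fin m → ℝ => x i) ∘ T = Neg.neg ∘ (fun x : Fin m → ℝ => x i) :=
          rfl
        rw [heq, ← Measure.map_map hnegm (measurable_pi_apply i), hmap i]
      · have hsm : MeasurableSet {x : Fin m → ℝ | ∑ i, x i = -(m * c : ℝ)} :=
          measurableSet_eq_fun (by fun_prop) measurable_const
        rw [Measure.map_apply hTm hsm]
        have hpre : T ⁻¹' {x : Fin m → ℝ | ∑ i, x i = -(m * c : ℝ)}
            = {x : Fin m → ℝ | ∑ i, x i = (m * c : ℝ)} := by
          ext x
          simp only [Set.mem_preimage, Set.mem_setOf_eq, hT, Finset.sum_neg_distrib, neg_inj]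
        rw [hpre]
        exact hone
end

section
/- Let μ be a Borel probability measure on ℝ and n ≥ 2. If c ∈ ℝ is an n-center of μ, then for every t < c one has ∫_t^{nc−(n−1)t} μ((x, ∞)) dx ≥ c − t. -/
open MeasureTheory ENNReal

theorem stmt15 (n : ℕ) (hn : 2 ≤ n) (μ : Measure ℝ) [IsProbabilityMeasure μ]
    (c : ℝ) (h : IsCompletelyMixable n μ c) (t : ℝ) (ht : t < c) :
    c - t ≤ ∫ x in t..(n * c - ((n : ℝ) - 1) * t), (μ (Set.Ioi x)).toReal := by
  obtain ⟨P, hP, hmarg, hsum⟩ := h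
  have hn0 : (0:ℝ) < n := by positivity
  set M : ℝ := n * (c - t) with hMdef
  have hM0 : 0 < M := by
    have : (0:ℝ) < c - t := by linarith
    positivity
  set f : ℝ → ℝ := fun y => min (max (y - t) 0) M with hfdef
  have hfc : Continuous f := by fun_prop
  have hf0 : ∀ y, 0 ≤ f y := fun y => le_min (le_max_right _ _) hM0.le
  have hfM : ∀ y, f y ≤ M := fun y => min_le_right _ _
  have hend : n * c - ((n:ℝ) - 1) * t = t + M := by rw [hMdef]; ring
  -- integrability of f under μ
  have hfint : Integrable f μ := by
    refine (integrable_const M).mono' hfc.aestronglyMeasurable ?_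
    refine Filter.Eventually.of_forall fun y => ?_
    rw [Real.norm_eq_abs, abs_of_nonneg (hf0 y)]; exact hfM y
  -- layer cake: ∫ f ∂μ equals the interval integral
  have key : ∫ y, f y ∂μ = ∫ x in t..(t + M), (μ (Set.Ioi x)).toReal := by
    rw [hfint.integral_eq_integral_Ioc_meas_le (Filter.Eventually.of_forall hf0)
      (Filter.Eventually.of_forall hfM)]
    rw [← intervalIntegral.integral_of_le hM0.le]
    have h1 : (∫ s in (0:ℝ)..M, (μ {a | s ≤ f a}).toReal)
        = ∫ s in (0:ℝ)..M, (μ (Set.Ioi (t + s))).toReal := by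
      apply intervalIntegral.integral_congr_ae
      filter_upwards [meas_le_ae_eq_meas_lt (μ := μ) (volume : Measure ℝ) f,
        (Set.countable_singleton M).ae_notMem (volume : Measure ℝ)] with s hs hsM hsI
      rw [Set.uIoc_of_le hM0.le] at hsI
      have hsltM : s < M := lt_of_le_of_ne hsI.2 (by simpa using hsM)
      rw [hs]
      congr 2
      ext a
      simp only [Set.mem_setOf_eq, Set.mem_Ioi, hfdef]
      constructor
      · intro hlt
        have h1 : s < max (a - t) 0 := lt_of_lt_of_le hlt (min_le_left _ _)
        have h2 : s < a - t := by
          rcases max_cases (a - t) 0 with ⟨he, _⟩ | ⟨he, _⟩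
          · rwa [he] at h1
          · rw [he] at h1; linarith [hsI.1]
        linarith
      · intro ha
        have : s < a - t := by linarith
        exact lt_min (lt_of_lt_of_le this (le_max_left _ _)) hsltM
    simp only [measureReal_def]
    rw [h1]
    have := intervalIntegral.integral_comp_add_left
      (f := fun x => (μ (Set.Ioi x)).toReal) (a := (0:ℝ)) (b := M) t
    rw [this, add_zero]
  -- marginals: ∫ f ∂μ = ∫ f(ω i) ∂P
  have hmeasproj : ∀ i : Fin n, Measurable (fun ω : Fin n → ℝ => ω i) :=
    fun i => measurable_pi_apply i
  have hstep : ∀ i : Fin n, ∫ ω, f (ω i) ∂P = ∫ y, f y ∂μ := by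
    intro i
    have hm : P.map (fun x => x i) = μ := hmarg i
    rw [← hm, integral_map (hmeasproj i).aemeasurable hfc.aestronglyMeasurable]
  have hintP : ∀ i : Fin n, Integrable (fun ω => f (ω i)) P := by
    intro i
    refine (integrable_const M).mono'
      ((hfc.measurable.comp (hmeasproj i)).aestronglyMeasurable) ?_
    refine Filter.Eventually.of_forall fun ω => ?_
    rw [Real.norm_eq_abs, abs_of_nonneg (hf0 _)]; exact hfM _
  -- a.e. the sum of coordinates is n*c
  have hS : MeasurableSet {x : Fin n → ℝ | ∑ i, x i = n * c} := by
    have : Measurable fun x : Fin n → ℝ => ∑ i, x i :=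
      Finset.measurable_sum _ fun i _ => hmeasproj i
    exact this (measurableSet_singleton (n * c))
  have hae : ∀ᵐ ω ∂P, ∑ i, ω i = (n : ℝ) * c := by
    have : P {x : Fin n → ℝ | ∑ i, x i = n * c}ᶜ = 0 := by
      rw [measure_compl hS (measure_ne_top _ _), hsum, measure_univ, tsub_self]
    exact (ae_iff).mpr this
  -- pointwise: on the hyperplane, M ≤ ∑ f(ω i)
  have hpt : ∀ ω : Fin n → ℝ, ∑ i, ω i = (n : ℝ) * c → M ≤ ∑ i, f (ω i) := by
    intro ω hω
    by_cases hcase : ∃ i, M ≤ ω i - t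
    · obtain ⟨i, hi⟩ := hcase
      have hfi : f (ω i) = M := by
        have : M ≤ max (ω i - t) 0 := le_trans hi (le_max_left _ _)
        simp [hfdef, min_eq_right this]
      calc M = f (ω i) := hfi.symm
        _ ≤ ∑ j, f (ω j) :=
          Finset.single_le_sum (fun j _ => hf0 (ω j)) (Finset.mem_univ i)
    · push_neg at hcase
      have hle : ∀ i : Fin n, ω i - t ≤ f (ω i) := by
        intro i
        have : max (ω i - t) 0 ≤ M := max_le (hcase i).le hM0.le
        rw [hfdef]
        simp only [min_eq_left this]
        exact le_max_left _ _
      calc M = ∑ i : Fin n, (ω i - t) := by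
              rw [Finset.sum_sub_distrib, Finset.sum_const, Finset.card_univ,
                Fintype.card_fin, hω, nsmul_eq_mul, hMdef]; ring
        _ ≤ ∑ i, f (ω i) := Finset.sum_le_sum fun i _ => hle i
  -- put it together
  have hMle : M ≤ (n : ℝ) * ∫ y, f y ∂μ := by
    have h1 : M = ∫ _ω, M ∂P := by simp [measure_univ]
    have h2 : (∫ _ω, M ∂P) ≤ ∫ ω, ∑ i, f (ω i) ∂P := by
      refine integral_mono_ae (integrable_const M)
        (integrable_finset_sum _ fun i _ => hintP i) ?_
      filter_upwards [hae] with ω hω using hpt ω hω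
    have h3 : (∫ ω, ∑ i, f (ω i) ∂P) = ∑ i : Fin n, ∫ ω, f (ω i) ∂P :=
      integral_finset_sum _ fun i _ => hintP i
    have h4 : (∑ i : Fin n, ∫ ω, f (ω i) ∂P) = (n : ℝ) * ∫ y, f y ∂μ := by
      simp [hstep, Finset.sum_const, Finset.card_univ]
    linarith [h1, h2, h3.le, h3.ge, h4.le, h4.ge]
  have hfin : c - t ≤ ∫ y, f y ∂μ := by
    rw [hMdef] at hMle
    nlinarith [hMle]
  rw [hend]
  linarith [key.le, key.ge, hfin]
end

section
/- Let n ≥ 2 and let μ be the standard Cauchy distribution. For α ∈ (0, 1/n), R_{[(n−1)α, 1−α]}(μ) = (1/(π(1−nα)))·log(sin(π(n−1)α)/sin(πα)), and consequently every n-center c of μ satisfies |c| ≤ log(n−1)/π. -/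
open MeasureTheory ENNReal

/-- The standard Cauchy distribution on ℝ. -/
noncomputable def stdCauchy : Measure ℝ :=
  volume.withDensity (fun x => ENNReal.ofReal ((Real.pi * (1 + x ^ 2))⁻¹))

open Real Filter Set Topology

lemma densC_nonneg (x : ℝ) : 0 ≤ (Real.pi * (1 + x ^ 2))⁻¹ := by positivity

lemma densC_cont : Continuous (fun x : ℝ => (Real.pi * (1 + x ^ 2))⁻¹) := by
  apply Continuous.inv₀ (by continuity)
  intro x; positivity

lemma densC_integrable : Integrable (fun x : ℝ => (Real.pi * (1 + x ^ 2))⁻¹) := by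
  have : (fun x : ℝ => (Real.pi * (1 + x ^ 2))⁻¹) = fun x : ℝ => Real.pi⁻¹ * (1 + x ^ 2)⁻¹ := by
    funext x; rw [mul_inv]
  rw [this]
  exact integrable_inv_one_add_sq.const_mul _

lemma stdCauchy_integral (g : ℝ → ℝ) :
    ∫ x, g x ∂stdCauchy = ∫ x, (Real.pi * (1 + x ^ 2))⁻¹ * g x := by
  have hm : Measurable (fun x : ℝ => ((Real.pi * (1 + x ^ 2))⁻¹).toNNReal) :=
    (measurable_real_toNNReal.comp densC_cont.measurable)
  have : stdCauchy = volume.withDensity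
      (fun x => (((Real.pi * (1 + x ^ 2))⁻¹).toNNReal : ℝ≥0∞)) := rfl
  rw [this, integral_withDensity_eq_integral_smul hm]
  congr 1; funext x
  rw [NNReal.smul_def, smul_eq_mul, Real.coe_toNNReal _ (densC_nonneg x)]

lemma stdCauchy_Iic (x : ℝ) :
    stdCauchy (Set.Iic x) = ENNReal.ofReal (1/2 + Real.arctan x / Real.pi) := by
  rw [stdCauchy, withDensity_apply _ measurableSet_Iic,
    ← ofReal_integral_eq_lintegral_ofReal (densC_integrable.integrableOn)
      (Filter.Eventually.of_forall fun y => densC_nonneg y)]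
  congr 1
  have : ∀ y : ℝ, (Real.pi * (1 + y ^ 2))⁻¹ = Real.pi⁻¹ * (1 + y ^ 2)⁻¹ := fun y => mul_inv _ _
  simp_rw [this]
  rw [MeasureTheory.integral_const_mul, integral_Iic_inv_one_add_sq]
  field_simp
  ring

lemma stdCauchy_Iic_toReal (x : ℝ) :
    (stdCauchy (Set.Iic x)).toReal = 1/2 + Real.arctan x / Real.pi := by
  rw [stdCauchy_Iic, ENNReal.toReal_ofReal]
  have h1 := Real.neg_pi_div_two_lt_arctan x
  have h2 := Real.pi_pos
  have h3 := (div_lt_div_iff_of_pos_right h2).mpr h1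
  rw [neg_div, div_div_cancel_left' ] at h3
  · linarith
  · exact ne_of_gt h2


lemma quantile_stdCauchy {t : ℝ} (h0 : 0 < t) (h1 : t < 1) :
    quantile stdCauchy t = Real.tan (Real.pi * t - Real.pi / 2) := by
  have hπ := Real.pi_pos
  set x₀ := Real.tan (Real.pi * t - Real.pi / 2) with hx₀
  have hmem : Real.pi * t - Real.pi / 2 ∈ Set.Ioo (-(Real.pi/2)) (Real.pi/2) := by
    constructor <;> nlinarith
  have hF : ∀ x : ℝ, (stdCauchy (Set.Iic x)).toReal = 1/2 + Real.arctan x / Real.pi :=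
    stdCauchy_Iic_toReal
  have hFx₀ : (stdCauchy (Set.Iic x₀)).toReal = t := by
    rw [hF, hx₀, Real.arctan_tan hmem.1 hmem.2]
    field_simp
    ring
  have hset : {x : ℝ | t ≤ (stdCauchy (Set.Iic x)).toReal} = Set.Ici x₀ := by
    ext x
    simp only [Set.mem_setOf_eq, Set.mem_Ici]
    rw [hF x, ← hFx₀, hF x₀]
    constructor
    · intro hh
      have h' : Real.arctan x₀ / Real.pi ≤ Real.arctan x / Real.pi := by linarith
      have : Real.arctan x₀ ≤ Real.arctan x :=
        (div_le_div_iff_of_pos_right hπ).mp h'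
      exact Real.arctan_strictMono.le_iff_le.mp this
    · intro hh
      have h' := Real.arctan_strictMono.monotone hh
      have : Real.arctan x₀ / Real.pi ≤ Real.arctan x / Real.pi :=
        (div_le_div_iff_of_pos_right hπ).mpr h'
      linarith
  rw [quantile, hset, csInf_Ici]


lemma cos_shift_pos {t : ℝ} (h0 : 0 < t) (h1 : t < 1) :
    0 < Real.cos (Real.pi * t - Real.pi / 2) := by
  have hπ := Real.pi_pos
  apply Real.cos_pos_of_mem_Ioo
  exact ⟨by nlinarith, by nlinarith⟩

lemma tan_hasDeriv {t : ℝ} (h0 : 0 < t) (h1 : t < 1) :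
    HasDerivAt (fun u : ℝ => -Real.pi⁻¹ * Real.log (Real.cos (Real.pi * u - Real.pi / 2)))
      (Real.tan (Real.pi * t - Real.pi / 2)) t := by
  have hπ := Real.pi_pos
  have hc := cos_shift_pos h0 h1
  have hinner : HasDerivAt (fun u : ℝ => Real.pi * u - Real.pi / 2) Real.pi t := by
    simpa using ((hasDerivAt_id t).const_mul Real.pi).sub_const (Real.pi / 2)
  have hcos : HasDerivAt (fun u : ℝ => Real.cos (Real.pi * u - Real.pi / 2))
      (-Real.sin (Real.pi * t - Real.pi / 2) * Real.pi) t :=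
    (Real.hasDerivAt_cos _).comp t hinner
  have hlog : HasDerivAt (fun u : ℝ => Real.log (Real.cos (Real.pi * u - Real.pi / 2)))
      ((Real.cos (Real.pi * t - Real.pi / 2))⁻¹ * (-Real.sin (Real.pi * t - Real.pi / 2) * Real.pi)) t := by
    have := (Real.hasDerivAt_log hc.ne').comp t hcos; exact this
  have := hlog.const_mul (-Real.pi⁻¹)
  convert this using 1
  · rfl
  · rfl
  rw [Real.tan_eq_sin_div_cos]
  field_simp

lemma tan_contOn {a b : ℝ} (ha : 0 < a) (hb : b < 1) (hab : a ≤ b) :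
    ContinuousOn (fun t : ℝ => Real.tan (Real.pi * t - Real.pi / 2)) (Set.uIcc a b) := by
  have huIcc : Set.uIcc a b = Set.Icc a b := Set.uIcc_of_le hab
  intro t ht
  rw [huIcc] at ht
  have hc := cos_shift_pos (lt_of_lt_of_le ha ht.1) (lt_of_le_of_lt ht.2 hb)
  apply ContinuousAt.continuousWithinAt
  have h1 : ContinuousAt Real.tan (Real.pi * t - Real.pi / 2) := Real.continuousAt_tan.mpr hc.ne'
  have h2 : ContinuousAt (fun u : ℝ => Real.pi * u - Real.pi / 2) t :=
    ((continuous_const.mul continuous_id).sub continuous_const).continuousAt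
  have h3 : ContinuousAt (Real.tan ∘ fun u : ℝ => Real.pi * u - Real.pi / 2) t := ContinuousAt.comp (f := fun u : ℝ => Real.pi * u - Real.pi / 2) (x := t) h1 h2
  exact h3

lemma integral_tan_shift {a b : ℝ} (ha : 0 < a) (hb : b < 1) (hab : a ≤ b) :
    ∫ t in a..b, Real.tan (Real.pi * t - Real.pi / 2) =
      Real.pi⁻¹ * Real.log (Real.cos (Real.pi * a - Real.pi / 2) / Real.cos (Real.pi * b - Real.pi / 2)) := by
  have key : ∫ t in a..b, Real.tan (Real.pi * t - Real.pi / 2) =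
      (-Real.pi⁻¹ * Real.log (Real.cos (Real.pi * b - Real.pi / 2))) -
      (-Real.pi⁻¹ * Real.log (Real.cos (Real.pi * a - Real.pi / 2))) := by
    apply intervalIntegral.integral_eq_sub_of_hasDerivAt
    · intro t ht
      rw [Set.uIcc_of_le hab] at ht
      exact tan_hasDeriv (lt_of_lt_of_le ha ht.1) (lt_of_le_of_lt ht.2 hb)
    · exact (tan_contOn ha hb hab).intervalIntegrable
  rw [key, Real.log_div (cos_shift_pos ha (lt_of_le_of_lt hab hb)).ne'
    (cos_shift_pos (lt_of_lt_of_le ha hab) hb).ne']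
  ring


lemma part1 (n : ℕ) (hn : 2 ≤ n) (α : ℝ) (hα : α ∈ Set.Ioo (0 : ℝ) (1 / n)) :
    avgQuantile stdCauchy (((n : ℝ) - 1) * α) (1 - α) =
      (1 / (Real.pi * (1 - n * α))) *
        Real.log (Real.sin (Real.pi * ((n : ℝ) - 1) * α) / Real.sin (Real.pi * α)) := by
  obtain ⟨hα0, hα1⟩ := hα
  have hn2 : (2 : ℝ) ≤ (n : ℝ) := by exact_mod_cast hn
  have hnpos : (0 : ℝ) < n := by linarith
  have hnα : (n : ℝ) * α < 1 := by
    have h := (lt_div_iff₀ hnpos).mp hα1; nlinarith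
  set a := ((n : ℝ) - 1) * α with ha_def
  set b := (1 : ℝ) - α with hb_def
  have ha0 : 0 < a := by apply _root_.mul_pos; linarith; exact hα0
  have hb1 : b < 1 := by simp [hb_def]; linarith
  have hab : a ≤ b := by
    have : a + α = (n : ℝ) * α := by ring
    nlinarith
  -- rewrite quantile as tan on the interval
  have hcongr : ∫ t in a..b, quantile stdCauchy t
      = ∫ t in a..b, Real.tan (Real.pi * t - Real.pi / 2) := by
    apply intervalIntegral.integral_congr
    intro t ht
    rw [Set.uIcc_of_le hab] at ht
    exact quantile_stdCauchy (lt_of_lt_of_le ha0 ht.1) (lt_of_le_of_lt ht.2 hb1)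
  have hcos_a : Real.cos (Real.pi * a - Real.pi / 2) = Real.sin (Real.pi * a) := by
    rw [← Real.cos_neg, neg_sub, Real.cos_pi_div_two_sub]
  have hcos_b : Real.cos (Real.pi * b - Real.pi / 2) = Real.sin (Real.pi * α) := by
    have hpb : Real.pi * b = Real.pi - Real.pi * α := by rw [hb_def]; ring
    rw [← Real.cos_neg, neg_sub, Real.cos_pi_div_two_sub, hpb, Real.sin_pi_sub]
  rw [avgQuantile, hcongr, integral_tan_shift ha0 hb1 hab, hcos_a, hcos_b]
  have h1 : b - a = 1 - n * α := by rw [ha_def, hb_def]; ring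
  have h2 : Real.pi * a = Real.pi * ((n:ℝ) - 1) * α := by rw [ha_def]; ring
  rw [h1, h2]
  have hπ := Real.pi_pos
  rw [one_div, mul_inv]
  ring


noncomputable def clampf (t M x : ℝ) : ℝ := max (min x M) t

lemma clampf_le {t M x : ℝ} (h : t ≤ M) : clampf t M x ≤ M := max_le (min_le_right _ _) h
lemma le_clampf {t M x : ℝ} : t ≤ clampf t M x := le_max_right _ _
lemma clampf_cont (t M : ℝ) : Continuous (clampf t M) :=
  (continuous_id.min continuous_const).max continuous_const

lemma integral_clampf {t M : ℝ} (h : t ≤ M) :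
    ∫ x, clampf t M x ∂stdCauchy =
      Real.pi⁻¹ * (t * (Real.arctan t + Real.pi / 2)
        + (1/2) * Real.log ((1 + M ^ 2) / (1 + t ^ 2))
        + M * (Real.pi / 2 - Real.arctan M)) := by
  rw [stdCauchy_integral]
  set h' : ℝ → ℝ := fun x => (Real.pi * (1 + x ^ 2))⁻¹ * clampf t M x with hh
  have hbound : ∀ x, |h' x| ≤ (max |t| |M|) * (Real.pi * (1 + x ^ 2))⁻¹ := by
    intro x
    rw [hh]
    simp only [abs_mul, abs_of_nonneg (densC_nonneg x)]
    rw [mul_comm]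
    apply mul_le_mul_of_nonneg_right _ (densC_nonneg x)
    rw [abs_le]
    constructor
    · have := le_clampf (t := t) (M := M) (x := x)
      have ht : -|t| ≤ t := neg_abs_le t
      have : -(max |t| |M|) ≤ -|t| := by simp [neg_le_neg_iff]
      linarith [le_max_left |t| |M|]
    · have h1 := clampf_le (t := t) (M := M) (x := x) h
      have : M ≤ |M| := le_abs_self M
      linarith [le_max_right |t| |M|]
  have hcont : Continuous h' := densC_cont.mul (clampf_cont t M)
  have hint : Integrable h' := by
    apply Integrable.mono' (densC_integrable.const_mul (max |t| |M|))
      hcont.aestronglyMeasurable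
    exact Filter.Eventually.of_forall hbound
  -- split the integral
  have hsplit : ∫ x, h' x = (∫ x in Set.Iic t, h' x) + ((∫ x in Set.Ioc t M, h' x)
      + (∫ x in Set.Ioi M, h' x)) := by
    have e1 : ∫ x, h' x = ∫ x in Set.Iic t ∪ Set.Ioi t, h' x := by
      rw [Set.Iic_union_Ioi, setIntegral_univ]
    rw [e1, setIntegral_union (Set.Iic_disjoint_Ioi le_rfl) measurableSet_Ioi
      hint.integrableOn hint.integrableOn]
    congr 1
    rw [← Set.Ioc_union_Ioi_eq_Ioi h, setIntegral_union _ measurableSet_Ioi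
      hint.integrableOn hint.integrableOn]
    · exact Set.Ioc_disjoint_Ioi le_rfl
  have hI1 : ∫ x in Set.Iic t, h' x = Real.pi⁻¹ * (t * (Real.arctan t + Real.pi / 2)) := by
    have : ∀ x ∈ Set.Iic t, h' x = (t * Real.pi⁻¹) * (1 + x ^ 2)⁻¹ := by
      intro x hx
      rw [hh]
      simp only []
      have hcl : clampf t M x = t := by
        rw [clampf, min_eq_left (le_trans hx h), max_eq_right hx]
      rw [hcl, mul_inv]
      ring
    rw [setIntegral_congr_fun measurableSet_Iic this, MeasureTheory.integral_const_mul,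
      integral_Iic_inv_one_add_sq]
    ring
  have hI3 : ∫ x in Set.Ioi M, h' x = Real.pi⁻¹ * (M * (Real.pi / 2 - Real.arctan M)) := by
    have : ∀ x ∈ Set.Ioi M, h' x = (M * Real.pi⁻¹) * (1 + x ^ 2)⁻¹ := by
      intro x hx
      rw [hh]
      simp only []
      have hcl : clampf t M x = M := by
        rw [clampf, min_eq_right (le_of_lt hx), max_eq_left h]
      rw [hcl, mul_inv]
      ring
    rw [setIntegral_congr_fun measurableSet_Ioi this, MeasureTheory.integral_const_mul,
      integral_Ioi_inv_one_add_sq]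
    ring
  have hI2 : ∫ x in Set.Ioc t M, h' x =
      Real.pi⁻¹ * ((1/2) * Real.log ((1 + M ^ 2) / (1 + t ^ 2))) := by
    have hcongr : ∀ x ∈ Set.Ioc t M, h' x = Real.pi⁻¹ * (x * (1 + x ^ 2)⁻¹) := by
      intro x hx
      rw [hh]
      simp only []
      have hcl : clampf t M x = x := by
        rw [clampf, min_eq_left hx.2, max_eq_left (le_of_lt hx.1)]
      rw [hcl, mul_inv]
      ring
    rw [setIntegral_congr_fun measurableSet_Ioc hcongr,
      ← intervalIntegral.integral_of_le h, intervalIntegral.integral_const_mul]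
    have hft : ∀ x : ℝ, HasDerivAt (fun y : ℝ => (1/2 : ℝ) * Real.log (1 + y ^ 2))
        (x * (1 + x ^ 2)⁻¹) x := by
      intro x
      have hpos : (0 : ℝ) < 1 + x ^ 2 := by positivity
      have hin : HasDerivAt (fun y : ℝ => 1 + y ^ 2) (2 * x) x := by
        simpa using ((hasDerivAt_pow 2 x).const_add 1)
      have hlog := (Real.hasDerivAt_log hpos.ne').comp x hin
      have := hlog.const_mul (1/2 : ℝ)
      convert this using 1
      · rfl
      · rfl
      · rfl
      field_simp
    have hcont2 : Continuous (fun x : ℝ => x * (1 + x ^ 2)⁻¹) := by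
      apply continuous_id.mul (Continuous.inv₀ (by continuity) ?_)
      intro x; positivity
    rw [intervalIntegral.integral_eq_sub_of_hasDerivAt (fun x _ => hft x)
      (hcont2.intervalIntegrable t M)]
    have h1 : (0:ℝ) < 1 + M ^ 2 := by positivity
    have h2 : (0:ℝ) < 1 + t ^ 2 := by positivity
    rw [Real.log_div h1.ne' h2.ne']
    ring
  rw [hsplit, hI1, hI2, hI3]
  ring


lemma arctan_slope : Tendsto (fun u : ℝ => Real.arctan u / u) (𝓝[≠] (0:ℝ)) (𝓝 1) := by
  have h := Real.hasDerivAt_arctan 0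
  rw [hasDerivAt_iff_tendsto_slope] at h
  simp only [zero_pow, one_div] at h
  have : (fun u : ℝ => Real.arctan u / u) = slope Real.arctan 0 := by
    funext u; rw [slope_def_field]; simp [div_eq_mul_inv]
  rw [this]
  convert h using 2
  norm_num

lemma tendsto_inv_nhdsNe_atTop : Tendsto (fun x : ℝ => x⁻¹) atTop (𝓝[≠] (0:ℝ)) := by
  apply tendsto_nhdsWithin_of_tendsto_nhds_of_eventually_within _ tendsto_inv_atTop_zero
  filter_upwards [eventually_gt_atTop 0] with x hx
  simp [ne_of_gt (inv_pos.mpr hx)]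

lemma tendsto_inv_nhdsNe_atBot : Tendsto (fun x : ℝ => x⁻¹) atBot (𝓝[≠] (0:ℝ)) := by
  have h1 : Tendsto (fun x : ℝ => -x) atBot atTop := tendsto_neg_atBot_atTop
  have h2 : Tendsto (fun x : ℝ => (-x)⁻¹) atBot (𝓝 (0:ℝ)) := tendsto_inv_atTop_zero.comp h1
  have h3 : Tendsto (fun x : ℝ => -(-x)⁻¹) atBot (𝓝 (-(0:ℝ))) := h2.neg
  rw [neg_zero] at h3
  have h0 : Tendsto (fun x : ℝ => x⁻¹) atBot (𝓝 (0:ℝ)) := by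
    apply h3.congr
    intro x
    rw [inv_neg, neg_neg]
  apply tendsto_nhdsWithin_of_tendsto_nhds_of_eventually_within _ h0
  filter_upwards [eventually_lt_atBot 0] with x hx
  simp [ne_of_lt (inv_neg''.mpr hx)]

lemma tendsto_upper_tail : Tendsto (fun x : ℝ => x * (Real.pi / 2 - Real.arctan x)) atTop (𝓝 1) := by
  have h := arctan_slope.comp tendsto_inv_nhdsNe_atTop
  apply h.congr'
  filter_upwards [eventually_gt_atTop 0] with x hx
  simp only [Function.comp]
  rw [Real.arctan_inv_of_pos hx]
  field_simp

lemma tendsto_lower_tail : Tendsto (fun x : ℝ => x * (Real.arctan x + Real.pi / 2)) atBot (𝓝 (-1)) := by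
  have h := (arctan_slope.comp tendsto_inv_nhdsNe_atBot).neg
  rw [show -(1:ℝ) = -1 from rfl] at h
  apply h.congr'
  filter_upwards [eventually_lt_atBot 0] with x hx
  simp only [Function.comp]
  rw [Real.arctan_inv_of_neg hx]
  field_simp
  ring


lemma clampf_abs_le {t M x : ℝ} (h : t ≤ M) : |clampf t M x| ≤ max |t| |M| := by
  rw [abs_le]
  constructor
  · have h1 := le_clampf (t := t) (M := M) (x := x)
    have h2 : -|t| ≤ t := neg_abs_le t
    have h3 : |t| ≤ max |t| |M| := le_max_left _ _
    linarith
  · have h1 := clampf_le (t := t) (M := M) (x := x) h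
    have h2 : M ≤ |M| := le_abs_self M
    have h3 : |M| ≤ max |t| |M| := le_max_right _ _
    linarith

section main
variable {n : ℕ} {c : ℝ}

lemma sum_clampf_integral (hn : 1 ≤ n) (hmix : IsCompletelyMixable n stdCauchy c)
    {t M : ℝ} (h : t ≤ M)
    (hpt : ∀ x : Fin n → ℝ, ∑ i, x i = n * c → (n : ℝ) * c ≤ ∑ i, clampf t M (x i)) :
    (n : ℝ) * c ≤ (n : ℝ) * ∫ y, clampf t M y ∂stdCauchy := by
  obtain ⟨P, hP, hmarg, hone⟩ := hmix
  have hae : ∀ᵐ x ∂P, ∑ i, x i = (n : ℝ) * c := by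
    rw [MeasureTheory.ae_iff]
    have hmeas : MeasurableSet {x : Fin n → ℝ | ∑ i, x i = (n : ℝ) * c} := by
      apply measurableSet_eq_fun _ measurable_const
      exact Finset.measurable_sum _ (fun i _ => measurable_pi_apply i)
    have : {x : Fin n → ℝ | ¬ (∑ i, x i = (n:ℝ) * c)} =
        {x : Fin n → ℝ | ∑ i, x i = (n:ℝ) * c}ᶜ := rfl
    rw [this, measure_compl hmeas (measure_ne_top _ _), measure_univ, hone, tsub_self]
  have hintg : ∀ i : Fin n, Integrable (fun x : Fin n → ℝ => clampf t M (x i)) P := by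
    intro i
    apply Integrable.mono' (integrable_const (max |t| |M|))
    · exact ((clampf_cont t M).comp (continuous_apply i)).aestronglyMeasurable
    · exact Filter.Eventually.of_forall fun x => clampf_abs_le h
  have hsum_int : Integrable (fun x : Fin n → ℝ => ∑ i, clampf t M (x i)) P :=
    integrable_finset_sum _ (fun i _ => hintg i)
  have step1 : (n : ℝ) * c ≤ ∫ x, (∑ i, clampf t M (x i)) ∂P := by
    have h0 : ∫ _x, ((n:ℝ) * c) ∂P = (n:ℝ) * c := by
      simp [integral_const, measure_univ]
    rw [← h0]
    apply integral_mono_ae (integrable_const _) hsum_int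
    exact hae.mono fun x hx => hpt x hx
  have step2 : ∫ x, (∑ i, clampf t M (x i)) ∂P
      = ∑ _i : Fin n, ∫ y, clampf t M y ∂stdCauchy := by
    rw [integral_finset_sum _ (fun i _ => hintg i)]
    congr 1
    funext i
    have hm : Measure.map (fun x : Fin n → ℝ => x i) P = stdCauchy := hmarg i
    rw [← hm, integral_map (measurable_pi_apply i).aemeasurable
      (clampf_cont t M).aestronglyMeasurable]
  rw [step2] at step1
  simpa [Finset.sum_const, nsmul_eq_mul] using step1

lemma pointwise_upper (hn : 1 ≤ n) {t M : ℝ} (h : t ≤ M)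
    (htM : (n : ℝ) * c ≤ M + ((n : ℝ) - 1) * t) :
    ∀ x : Fin n → ℝ, ∑ i, x i = n * c → (n : ℝ) * c ≤ ∑ i, clampf t M (x i) := by
  intro x hx
  by_cases hall : ∀ i, x i ≤ M
  · calc (n : ℝ) * c = ∑ i, x i := hx.symm
      _ ≤ ∑ i, clampf t M (x i) := by
          apply Finset.sum_le_sum
          intro i _
          rw [clampf, min_eq_left (hall i)]
          exact le_max_left _ _
  · push_neg at hall
    obtain ⟨i₀, hi₀⟩ := hall
    have h1 : clampf t M (x i₀) = M := by
      rw [clampf, min_eq_right hi₀.le, max_eq_left h]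
    have h2 : ∑ i, clampf t M (x i) =
        clampf t M (x i₀) + ∑ i ∈ Finset.univ.erase i₀, clampf t M (x i) :=
      (Finset.add_sum_erase _ _ (Finset.mem_univ i₀)).symm
    have hcard : ((Finset.univ.erase i₀).card : ℝ) = (n : ℝ) - 1 := by
      rw [Finset.card_erase_of_mem (Finset.mem_univ i₀)]
      simp only [Finset.card_univ, Fintype.card_fin]
      rw [Nat.cast_sub hn]
      norm_num
    have h3 : ((n : ℝ) - 1) * t ≤ ∑ i ∈ Finset.univ.erase i₀, clampf t M (x i) := by
      have := Finset.card_nsmul_le_sum (Finset.univ.erase i₀)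
        (fun i => clampf t M (x i)) t (fun i _ => le_clampf)
      rw [nsmul_eq_mul, hcard] at this
      exact this
    linarith [h2, h1, h3, htM]

lemma pointwise_lower (hn : 1 ≤ n) {t M : ℝ} (h : t ≤ M)
    (htM : t + ((n : ℝ) - 1) * M ≤ (n : ℝ) * c) :
    ∀ x : Fin n → ℝ, ∑ i, x i = n * c → ∑ i, clampf t M (x i) ≤ (n : ℝ) * c := by
  intro x hx
  by_cases hall : ∀ i, t ≤ x i
  · calc ∑ i, clampf t M (x i) ≤ ∑ i, x i := by
          apply Finset.sum_le_sum
          intro i _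
          rw [clampf, max_eq_left (le_min (hall i) h)]
          exact min_le_left _ _
      _ = (n : ℝ) * c := hx
  · push_neg at hall
    obtain ⟨i₀, hi₀⟩ := hall
    have h1 : clampf t M (x i₀) = t := by
      rw [clampf, min_eq_left (le_trans hi₀.le h), max_eq_right hi₀.le]
    have h2 : ∑ i, clampf t M (x i) =
        clampf t M (x i₀) + ∑ i ∈ Finset.univ.erase i₀, clampf t M (x i) :=
      (Finset.add_sum_erase _ _ (Finset.mem_univ i₀)).symm
    have hcard : ((Finset.univ.erase i₀).card : ℝ) = (n : ℝ) - 1 := by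
      rw [Finset.card_erase_of_mem (Finset.mem_univ i₀)]
      simp only [Finset.card_univ, Fintype.card_fin]
      rw [Nat.cast_sub hn]
      norm_num
    have h3 : ∑ i ∈ Finset.univ.erase i₀, clampf t M (x i) ≤ ((n : ℝ) - 1) * M := by
      have := Finset.sum_le_card_nsmul (Finset.univ.erase i₀)
        (fun i => clampf t M (x i)) M (fun i _ => clampf_le h)
      rw [nsmul_eq_mul, hcard] at this
      exact this
    linarith [h2, h1, h3, htM]

end main


lemma sum_clampf_integral_lower {n : ℕ} {c : ℝ} (hmix : IsCompletelyMixable n stdCauchy c)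
    {t M : ℝ} (h : t ≤ M)
    (hpt : ∀ x : Fin n → ℝ, ∑ i, x i = n * c → ∑ i, clampf t M (x i) ≤ (n : ℝ) * c) :
    (n : ℝ) * ∫ y, clampf t M y ∂stdCauchy ≤ (n : ℝ) * c := by
  obtain ⟨P, hP, hmarg, hone⟩ := hmix
  have hae : ∀ᵐ x ∂P, ∑ i, x i = (n : ℝ) * c := by
    rw [MeasureTheory.ae_iff]
    have hmeas : MeasurableSet {x : Fin n → ℝ | ∑ i, x i = (n : ℝ) * c} := by
      apply measurableSet_eq_fun _ measurable_const
      exact Finset.measurable_sum _ (fun i _ => measurable_pi_apply i)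
    have : {x : Fin n → ℝ | ¬ (∑ i, x i = (n:ℝ) * c)} =
        {x : Fin n → ℝ | ∑ i, x i = (n:ℝ) * c}ᶜ := rfl
    rw [this, measure_compl hmeas (measure_ne_top _ _), measure_univ, hone, tsub_self]
  have hintg : ∀ i : Fin n, Integrable (fun x : Fin n → ℝ => clampf t M (x i)) P := by
    intro i
    apply Integrable.mono' (integrable_const (max |t| |M|))
    · exact ((clampf_cont t M).comp (continuous_apply i)).aestronglyMeasurable
    · exact Filter.Eventually.of_forall fun x => clampf_abs_le h
  have hsum_int : Integrable (fun x : Fin n → ℝ => ∑ i, clampf t M (x i)) P :=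
    integrable_finset_sum _ (fun i _ => hintg i)
  have step1 : ∫ x, (∑ i, clampf t M (x i)) ∂P ≤ (n : ℝ) * c := by
    have h0 : ∫ _x, ((n:ℝ) * c) ∂P = (n:ℝ) * c := by
      simp [integral_const, measure_univ]
    rw [← h0]
    apply integral_mono_ae hsum_int (integrable_const _)
    exact hae.mono fun x hx => hpt x hx
  have step2 : ∫ x, (∑ i, clampf t M (x i)) ∂P
      = ∑ _i : Fin n, ∫ y, clampf t M y ∂stdCauchy := by
    rw [integral_finset_sum _ (fun i _ => hintg i)]
    congr 1
    funext i
    have hm : Measure.map (fun x : Fin n → ℝ => x i) P = stdCauchy := hmarg i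
    rw [← hm, integral_map (measurable_pi_apply i).aemeasurable
      (clampf_cont t M).aestronglyMeasurable]
  rw [step2] at step1
  simpa [Finset.sum_const, nsmul_eq_mul] using step1

theorem stmt17 (n : ℕ) (hn : 2 ≤ n) :
    (∀ α ∈ Set.Ioo (0 : ℝ) (1 / n),
      avgQuantile stdCauchy (((n : ℝ) - 1) * α) (1 - α) =
        (1 / (Real.pi * (1 - n * α))) *
          Real.log (Real.sin (Real.pi * ((n : ℝ) - 1) * α) / Real.sin (Real.pi * α))) ∧
    ∀ c : ℝ, IsCompletelyMixable n stdCauchy c →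
      |c| ≤ Real.log ((n : ℝ) - 1) / Real.pi := by
  constructor
  · intro α hα
    exact part1 n hn α hα
  · intro c hmix
    have hn1 : 1 ≤ n := le_trans one_le_two hn
    have hnR : (2 : ℝ) ≤ (n : ℝ) := by exact_mod_cast hn
    have hnpos : (0 : ℝ) < (n : ℝ) := by linarith
    have hπ := Real.pi_pos
    have hn1pos : (0 : ℝ) < (n : ℝ) - 1 := by linarith
    have hlogsq : Real.pi⁻¹ * ((-1) + (1/2) * Real.log (((n:ℝ)-1)^2) + 1)
        = Real.log ((n:ℝ)-1) / Real.pi := by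
      rw [Real.log_pow]
      push_cast
      field_simp
      ring
    -- the common limit ingredients
    have hinv : Tendsto (fun R : ℝ => R⁻¹) atTop (𝓝 (0:ℝ)) := tendsto_inv_atTop_zero
    -- Upper bound : c ≤ log(n-1)/π
    have hupper : c ≤ Real.log ((n:ℝ)-1) / Real.pi := by
      set Mf : ℝ → ℝ := fun R => (n:ℝ) * c + ((n:ℝ) - 1) * R with hMf
      set V : ℝ → ℝ := fun R =>
        Real.pi⁻¹ * ((-R) * (Real.arctan (-R) + Real.pi / 2)
          + (1/2) * Real.log ((1 + (Mf R) ^ 2) / (1 + (-R) ^ 2))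
          + (Mf R) * (Real.pi / 2 - Real.arctan (Mf R))) with hV
      have hMtop : Tendsto Mf atTop atTop := by
        apply tendsto_atTop_add_const_left
        exact Tendsto.const_mul_atTop hn1pos tendsto_id
      have hA : Tendsto (fun R : ℝ => (-R) * (Real.arctan (-R) + Real.pi / 2)) atTop (𝓝 (-1)) :=
        tendsto_lower_tail.comp tendsto_neg_atTop_atBot
      have hB : Tendsto (fun R : ℝ => (Mf R) * (Real.pi / 2 - Real.arctan (Mf R))) atTop (𝓝 1) :=
        tendsto_upper_tail.comp hMtop
      have hratio : Tendsto (fun R : ℝ => (1 + (Mf R) ^ 2) / (1 + (-R) ^ 2)) atTop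
          (𝓝 (((n:ℝ)-1)^2)) := by
        have hnum : Tendsto (fun R : ℝ => (R⁻¹)^2 + ((n:ℝ) * c * R⁻¹ + ((n:ℝ)-1))^2) atTop
            (𝓝 ((0:ℝ)^2 + ((n:ℝ) * c * 0 + ((n:ℝ)-1))^2)) := by
          exact ((hinv.pow 2)).add ((((hinv.const_mul ((n:ℝ) * c))).add_const ((n:ℝ)-1)).pow 2)
        have hden : Tendsto (fun R : ℝ => (R⁻¹)^2 + (1:ℝ)) atTop (𝓝 ((0:ℝ)^2 + 1)) :=
          (hinv.pow 2).add_const 1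
        have hdiv := hnum.div hden (by norm_num)
        have heq : ((0:ℝ)^2 + ((n:ℝ) * c * 0 + ((n:ℝ)-1))^2) / ((0:ℝ)^2 + 1) = ((n:ℝ)-1)^2 := by
          norm_num
        rw [heq] at hdiv
        apply hdiv.congr'
        filter_upwards [eventually_ge_atTop (1:ℝ)] with R hR
        have hR0 : R ≠ 0 := by linarith
        rw [hMf, Pi.div_apply]
        field_simp
        try ring
      have hlog : Tendsto (fun R : ℝ => Real.log ((1 + (Mf R) ^ 2) / (1 + (-R) ^ 2))) atTop
          (𝓝 (Real.log (((n:ℝ)-1)^2))) :=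
        ((Real.continuousAt_log (by positivity)).tendsto).comp hratio
      have hVlim : Tendsto V atTop (𝓝 (Real.log ((n:ℝ)-1) / Real.pi)) := by
        rw [← hlogsq]
        exact ((hA.add (hlog.const_mul (1/2))).add hB).const_mul Real.pi⁻¹
      apply ge_of_tendsto hVlim
      filter_upwards [eventually_ge_atTop (|c| + 1)] with R hR
      have habs : -|c| ≤ c := neg_abs_le c
      have hR0 : (0:ℝ) < R := by
        have : (0:ℝ) ≤ |c| := abs_nonneg c
        linarith
      have ht : -R ≤ Mf R := by
        show -R ≤ (n:ℝ) * c + ((n:ℝ) - 1) * R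
        have f1 : (n:ℝ) * (-|c|) ≤ (n:ℝ) * c := mul_le_mul_of_nonneg_left habs hnpos.le
        have f3 : (n:ℝ) * |c| ≤ (n:ℝ) * R := mul_le_mul_of_nonneg_left (by linarith) hnpos.le
        nlinarith
      have htM : (n:ℝ) * c ≤ Mf R + ((n:ℝ) - 1) * (-R) :=
        le_of_eq (by rw [hMf]; ring)
      have hkey := sum_clampf_integral hn1 hmix ht (pointwise_upper hn1 ht htM)
      have hI : ∫ y, clampf (-R) (Mf R) y ∂stdCauchy = V R := by
        rw [integral_clampf ht, hV]
      rw [hI] at hkey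
      exact le_of_mul_le_mul_left hkey hnpos
    -- Lower bound : -log(n-1)/π ≤ c
    have hlower : -(Real.log ((n:ℝ)-1) / Real.pi) ≤ c := by
      set tf : ℝ → ℝ := fun R => (n:ℝ) * c - ((n:ℝ) - 1) * R with htf
      set V : ℝ → ℝ := fun R =>
        Real.pi⁻¹ * ((tf R) * (Real.arctan (tf R) + Real.pi / 2)
          + (1/2) * Real.log ((1 + R ^ 2) / (1 + (tf R) ^ 2))
          + R * (Real.pi / 2 - Real.arctan R)) with hV
      have htbot : Tendsto tf atTop atBot := by
        have h1 : Tendsto (fun R : ℝ => ((n:ℝ)-1) * R) atTop atTop :=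
          Tendsto.const_mul_atTop hn1pos tendsto_id
        have h2 : Tendsto (fun R : ℝ => -(((n:ℝ)-1) * R)) atTop atBot :=
          tendsto_neg_atTop_atBot.comp h1
        have h3 := tendsto_atBot_add_const_left atTop ((n:ℝ)*c) h2
        exact h3.congr (fun R => by
          show (n:ℝ) * c + -(((n:ℝ)-1) * R) = (n:ℝ) * c - ((n:ℝ)-1) * R
          ring)
      have hA : Tendsto (fun R : ℝ => (tf R) * (Real.arctan (tf R) + Real.pi / 2)) atTop (𝓝 (-1)) :=
        tendsto_lower_tail.comp htbot
      have hB : Tendsto (fun R : ℝ => R * (Real.pi / 2 - Real.arctan R)) atTop (𝓝 1) :=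
        tendsto_upper_tail
      have hratio : Tendsto (fun R : ℝ => (1 + R ^ 2) / (1 + (tf R) ^ 2)) atTop
          (𝓝 ((((n:ℝ)-1)^2)⁻¹)) := by
        have hnum : Tendsto (fun R : ℝ => (R⁻¹)^2 + (1:ℝ)) atTop (𝓝 ((0:ℝ)^2 + 1)) :=
          (hinv.pow 2).add_const 1
        have hden : Tendsto (fun R : ℝ => (R⁻¹)^2 + ((n:ℝ) * c * R⁻¹ - ((n:ℝ)-1))^2) atTop
            (𝓝 ((0:ℝ)^2 + ((n:ℝ) * c * 0 - ((n:ℝ)-1))^2)) := by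
          exact ((hinv.pow 2)).add ((((hinv.const_mul ((n:ℝ) * c))).sub_const ((n:ℝ)-1)).pow 2)
        have hne : ((0:ℝ)^2 + ((n:ℝ) * c * 0 - ((n:ℝ)-1))^2) ≠ 0 := by
          have he : ((0:ℝ)^2 + ((n:ℝ) * c * 0 - ((n:ℝ)-1))^2) = ((n:ℝ)-1)^2 := by ring
          rw [he]
          exact ne_of_gt (by nlinarith)
        have hdiv := hnum.div hden hne
        have heq : ((0:ℝ)^2 + 1) / ((0:ℝ)^2 + ((n:ℝ) * c * 0 - ((n:ℝ)-1))^2) = (((n:ℝ)-1)^2)⁻¹ := by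
          have he : ((0:ℝ)^2 + ((n:ℝ) * c * 0 - ((n:ℝ)-1))^2) = ((n:ℝ)-1)^2 := by ring
          rw [he]
          norm_num
        rw [heq] at hdiv
        apply hdiv.congr'
        filter_upwards [eventually_ge_atTop (1:ℝ)] with R hR
        have hR0 : R ≠ 0 := by linarith
        rw [htf, Pi.div_apply]
        field_simp
        try ring
        try exact Or.inl trivial
      have hlog : Tendsto (fun R : ℝ => Real.log ((1 + R ^ 2) / (1 + (tf R) ^ 2))) atTop
          (𝓝 (Real.log ((((n:ℝ)-1)^2)⁻¹))) :=
        ((Real.continuousAt_log (by positivity)).tendsto).comp hratio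
      have hval : Real.pi⁻¹ * ((-1) + (1/2) * Real.log ((((n:ℝ)-1)^2)⁻¹) + 1)
          = -(Real.log ((n:ℝ)-1) / Real.pi) := by
        rw [Real.log_inv, Real.log_pow]
        push_cast
        field_simp
        ring
      have hVlim : Tendsto V atTop (𝓝 (-(Real.log ((n:ℝ)-1) / Real.pi))) := by
        rw [← hval]
        exact ((hA.add (hlog.const_mul (1/2))).add hB).const_mul Real.pi⁻¹
      apply le_of_tendsto hVlim
      filter_upwards [eventually_ge_atTop (|c| + 1)] with R hR
      have habs : c ≤ |c| := le_abs_self c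
      have hR0 : (0:ℝ) < R := by
        have : (0:ℝ) ≤ |c| := abs_nonneg c
        linarith
      have ht : tf R ≤ R := by
        show (n:ℝ) * c - ((n:ℝ) - 1) * R ≤ R
        have f1 : (n:ℝ) * c ≤ (n:ℝ) * |c| := mul_le_mul_of_nonneg_left habs hnpos.le
        have f3 : (n:ℝ) * |c| ≤ (n:ℝ) * R := mul_le_mul_of_nonneg_left (by linarith) hnpos.le
        nlinarith
      have htM : tf R + ((n:ℝ) - 1) * R ≤ (n:ℝ) * c :=
        le_of_eq (by rw [htf]; ring)
      have hkey := sum_clampf_integral_lower hmix ht (pointwise_lower hn1 ht htM)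
      have hI : ∫ y, clampf (tf R) R y ∂stdCauchy = V R := by
        rw [integral_clampf ht, hV]
      rw [hI] at hkey
      exact le_of_mul_le_mul_left hkey hnpos
    rw [abs_le]
    exact ⟨by linarith, hupper⟩
end
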